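/- arXiv:1708.05578 — 3 statements merged into one kernel-verified Lean document; each statement's English description precedes it below -/
import Mathlib

section
/- Let h(z) = ∑_{k=1}^∞ a_k z^k and g(z) = ∑_{k=1}^∞ b_k z^k be analytic on the unit disk 𝔻 with h(0) = g(0) = 0, and suppose the harmonic mapping f(z) = h(z) + conj(g(z)) satisfies |f(z)| ≤ 1 for all z ∈ 𝔻. Then for every real p ≥ 2, ∑_{k=1}^∞ (|a_k|^p + |b_k|^p)^{1/p} · r^k ≤ 1 for all r with 0 ≤ r ≤ 1/√2. -/
open MeasureTheory Real Set Filter Complex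
open scoped Topology ComplexConjugate NNReal ENNReal

/-- `(x^p + y^p)^(1/p) ≤ √(x² + y²)` for `p ≥ 2`. -/
lemma aux_rpow_le_sqrt {x y p : ℝ} (hx : 0 ≤ x) (hy : 0 ≤ y) (hp : 2 ≤ p) :
    (x ^ p + y ^ p) ^ (1 / p) ≤ Real.sqrt (x ^ 2 + y ^ 2) := by
  lift x to ℝ≥0 using hx
  lift y to ℝ≥0 using hy
  have h := NNReal.rpow_add_rpow_le (p := 2) (q := p) x y two_pos hp
  have h2 : ((((x : ℝ≥0) ^ (2:ℝ) + y ^ (2:ℝ)) ^ (1 / (2:ℝ)) : ℝ≥0) : ℝ)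
      = Real.sqrt ((x:ℝ) ^ 2 + (y:ℝ) ^ 2) := by
    have e : ∀ t : ℝ≥0, ((t:ℝ)) ^ (2:ℝ) = (t:ℝ) ^ 2 := fun t => by
      rw [show (2:ℝ) = ((2:ℕ):ℝ) by norm_num, Real.rpow_natCast]
    rw [Real.sqrt_eq_rpow]
    push_cast [NNReal.coe_rpow]
    rw [e, e]
  calc ((x:ℝ) ^ p + (y:ℝ) ^ p) ^ (1 / p)
      = ((((x : ℝ≥0) ^ p + y ^ p) ^ (1 / p) : ℝ≥0) : ℝ) := by
        push_cast [NNReal.coe_rpow]; ring_nf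
    _ ≤ ((((x : ℝ≥0) ^ (2:ℝ) + y ^ (2:ℝ)) ^ (1 / (2:ℝ)) : ℝ≥0) : ℝ) := by exact_mod_cast h
    _ = Real.sqrt ((x:ℝ) ^ 2 + (y:ℝ) ^ 2) := h2

/-- Coefficient norms are summable against any radius `ρ < 1`. -/
lemma aux_summable_coeff {a : ℕ → ℂ}
    (hh : ∀ z : ℂ, ‖z‖ < 1 → Summable (fun k : ℕ => a k * z ^ k))
    {ρ : ℝ} (h0 : 0 ≤ ρ) (h1 : ρ < 1) :
    Summable (fun k : ℕ => ‖a k‖ * ρ ^ k) := by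
  set σ : ℝ := (1 + ρ) / 2 with hσ
  have hσ0 : 0 < σ := by simp only [hσ]; linarith
  have hρσ : ρ < σ := by simp only [hσ]; linarith
  have hσ1 : σ < 1 := by simp only [hσ]; linarith
  clear_value σ
  clear hσ
  have hs : Summable fun k : ℕ => a k * (σ : ℂ) ^ k := by
    refine hh σ ?_
    rw [Complex.norm_real, Real.norm_eq_abs, _root_.abs_of_nonneg hσ0.le]; exact hσ1
  obtain ⟨C, hC⟩ := (hs.tendsto_atTop_zero.norm.bddAbove_range)
  have hC' : ∀ k : ℕ, ‖a k‖ * σ ^ k ≤ C := by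
    intro k
    have := hC (Set.mem_range_self (f := fun k => ‖a k * (σ : ℂ) ^ k‖) k)
    simpa [norm_mul, norm_pow, Complex.norm_real, Real.norm_eq_abs,
      _root_.abs_of_nonneg hσ0.le] using this
  have hgeom : Summable fun k : ℕ => C * (ρ / σ) ^ k :=
    (summable_geometric_of_lt_one (by positivity) (by rw [div_lt_one hσ0]; exact hρσ)).mul_left C
  refine Summable.of_nonneg_of_le (fun k => by positivity) (fun k => ?_) hgeom
  have hrw : ‖a k‖ * ρ ^ k = (‖a k‖ * σ ^ k) * (ρ / σ) ^ k := by
    rw [div_pow]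
    field_simp
  rw [hrw]
  exact mul_le_mul_of_nonneg_right (hC' k) (by positivity)

/-- The basic exponential integral over a full period. -/
lemma aux_integral_exp (m : ℤ) :
    (∫ x in (0:ℝ)..(2*π), Complex.exp (m * x * Complex.I))
      = if m = 0 then ((2*π : ℝ) : ℂ) else 0 := by
  rcases eq_or_ne m 0 with hm | hm
  · simp [hm]
  · rw [if_neg hm]
    have h1 : ∀ x : ℝ, Complex.exp ((m:ℂ) * x * Complex.I)
        = Complex.exp (((m:ℂ) * Complex.I) * x) := by intro x; ring_nf
    simp_rw [h1]
    rw [integral_exp_mul_complex (mul_ne_zero (Int.cast_ne_zero.2 hm) Complex.I_ne_zero)]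
    push_cast
    rw [show ((m:ℂ) * Complex.I * (2*(π:ℂ))) = (m:ℂ) * (2*(π:ℂ)*Complex.I) by ring,
      Complex.exp_int_mul_two_pi_mul_I]
    simp

/-- Norm of a unimodular exponential. -/
lemma aux_norm_exp (m : ℤ) (x : ℝ) : ‖Complex.exp ((m:ℂ) * x * Complex.I)‖ = 1 := by
  have : (m:ℂ) * x * Complex.I = ((m * x : ℝ) : ℂ) * Complex.I := by push_cast; ring
  rw [this, Complex.norm_exp_ofReal_mul_I]

/-- Continuity of a power series on the circle of radius ρ. -/
lemma aux_continuous_tsum (c : ℕ → ℂ) (ρ : ℝ) (h0 : 0 ≤ ρ)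
    (hs : Summable fun k : ℕ => ‖c k‖ * ρ ^ k) :
    Continuous fun x : ℝ => ∑' k : ℕ, c k * ((ρ:ℂ) * Complex.exp (x * Complex.I)) ^ k := by
  refine (tendstoUniformlyOn_univ.mp
    (tendstoUniformlyOn_tsum hs fun k x _ => ?_)).continuous
    (Filter.Frequently.of_forall fun t => ?_)
  · rw [norm_mul, norm_pow, norm_mul, Complex.norm_real, Real.norm_eq_abs,
      _root_.abs_of_nonneg h0, Complex.norm_exp_ofReal_mul_I, mul_one]
  · exact continuous_finset_sum _ fun k _ => by fun_prop

/-- Parseval bound: for any finite set of coefficients on the circle of radius ρ. -/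
lemma aux_parseval
    (a b : ℕ → ℂ) (h g : ℂ → ℂ)
    (hh : ∀ z : ℂ, ‖z‖ < 1 → HasSum (fun k : ℕ => a k * z ^ k) (h z))
    (hg : ∀ z : ℂ, ‖z‖ < 1 → HasSum (fun k : ℕ => b k * z ^ k) (g z))
    (hbound : ∀ z : ℂ, ‖z‖ < 1 → ‖h z + (starRingEnd ℂ) (g z)‖ ≤ 1)
    (ρ : ℝ) (hρ0 : 0 < ρ) (hρ1 : ρ < 1) (s : Finset ℕ) :
    ∑ k ∈ s, (‖a (k+1)‖^2 + ‖b (k+1)‖^2) * (ρ^(k+1))^2 ≤ 1 := by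
  haveI : Fact (0 < 2*π) := ⟨Real.two_pi_pos⟩
  have h2π : (0:ℝ) < 2*π := Real.two_pi_pos
  set z : ℝ → ℂ := fun x => (ρ:ℂ) * Complex.exp (x * Complex.I) with hz
  have hznorm : ∀ x : ℝ, ‖z x‖ = ρ := fun x => by
    rw [hz]
    rw [norm_mul, Complex.norm_real, Real.norm_eq_abs, _root_.abs_of_nonneg hρ0.le,
      Complex.norm_exp_ofReal_mul_I, mul_one]
  have hz1 : ∀ x : ℝ, ‖z x‖ < 1 := fun x => by rw [hznorm]; exact hρ1
  set Φ : ℝ → ℂ := fun x => h (z x) + (starRingEnd ℂ) (g (z x)) with hΦ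
  have hsa : Summable fun k : ℕ => ‖a k‖ * ρ ^ k :=
    aux_summable_coeff (fun w hw => (hh w hw).summable) hρ0.le hρ1
  have hsb : Summable fun k : ℕ => ‖b k‖ * ρ ^ k :=
    aux_summable_coeff (fun w hw => (hg w hw).summable) hρ0.le hρ1
  -- continuity of Φ
  have hΦcont : Continuous Φ := by
    have e0 : Φ = fun x => (∑' k : ℕ, a k * (z x) ^ k)
        + (starRingEnd ℂ) (∑' k : ℕ, b k * (z x) ^ k) := by
      funext x
      rw [hΦ, (hh (z x) (hz1 x)).tsum_eq, (hg (z x) (hz1 x)).tsum_eq]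
    rw [e0]
    exact (aux_continuous_tsum a ρ hρ0.le hsa).add
      (Complex.continuous_conj.comp (aux_continuous_tsum b ρ hρ0.le hsb))
  have hzper : z 0 = z (2*π) := by
    rw [hz]
    push_cast
    rw [Complex.exp_two_pi_mul_I]
    simp
  have hΦper : Φ 0 = Φ (2*π) := by simp only [hΦ]; rw [hzper]
  set F : AddCircle (2*π) → ℂ := AddCircle.liftIco (2*π) 0 Φ with hF
  have hFcont : Continuous F := AddCircle.liftIco_zero_continuous hΦper hΦcont.continuousOn
  have hFb : ∀ t : AddCircle (2*π), ‖F t‖ ≤ 1 := by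
    intro t
    have : F t = Φ ((AddCircle.equivIco (2*π) 0 t : ℝ)) := rfl
    rw [this, hΦ]
    exact hbound _ (hz1 _)
  -- the summands
  set w : ℤ → ℕ → ℝ → ℂ := fun n k x =>
      a k * (ρ:ℂ)^k * Complex.exp ((((k:ℤ) - n : ℤ):ℂ) * x * Complex.I)
      + (starRingEnd ℂ) (b k) * (ρ:ℂ)^k * Complex.exp (((-(k:ℤ) - n : ℤ):ℂ) * x * Complex.I)
    with hwdef
  have hterm1 : ∀ (n : ℤ) (k : ℕ) (x : ℝ),
      Complex.exp (((-n:ℤ):ℂ) * x * Complex.I) * (a k * z x ^ k)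
        = a k * (ρ:ℂ)^k * Complex.exp ((((k:ℤ) - n : ℤ):ℂ) * x * Complex.I) := by
    intro n k x
    rw [hz]
    rw [mul_pow, ← Complex.exp_nat_mul]
    rw [show ((((k:ℤ) - n : ℤ):ℂ) * x * Complex.I)
        = (k:ℂ) * (x * Complex.I) + ((-n:ℤ):ℂ) * x * Complex.I by push_cast; ring]
    rw [Complex.exp_add]
    ring
  have hterm2 : ∀ (n : ℤ) (k : ℕ) (x : ℝ),
      Complex.exp (((-n:ℤ):ℂ) * x * Complex.I) * ((starRingEnd ℂ) (b k * z x ^ k))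
        = (starRingEnd ℂ) (b k) * (ρ:ℂ)^k * Complex.exp (((-(k:ℤ) - n : ℤ):ℂ) * x * Complex.I) := by
    intro n k x
    rw [map_mul, map_pow, hz]
    rw [map_mul, Complex.conj_ofReal, ← Complex.exp_conj, map_mul, Complex.conj_ofReal,
      Complex.conj_I]
    rw [mul_pow, ← Complex.exp_nat_mul]
    rw [show ((-(k:ℤ) - n : ℤ):ℂ) * x * Complex.I
        = (k:ℂ) * (x * -Complex.I) + ((-n:ℤ):ℂ) * x * Complex.I by push_cast; ring]
    rw [Complex.exp_add]
    ring
  have hΦsum : ∀ (n : ℤ) (x : ℝ), HasSum (fun k : ℕ => w n k x)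
      (Complex.exp (((-n:ℤ):ℂ) * x * Complex.I) * Φ x) := by
    intro n x
    have h1 := (hh (z x) (hz1 x)).mul_left (Complex.exp (((-n:ℤ):ℂ) * x * Complex.I))
    have h2 := (Complex.hasSum_conj'.mpr (hg (z x) (hz1 x))).mul_left
      (Complex.exp (((-n:ℤ):ℂ) * x * Complex.I))
    have h3 := h1.add h2
    rw [← mul_add] at h3
    simpa only [hwdef, hterm1 n, hterm2 n] using h3
  -- Fourier coefficients as interval integrals
  have hFC : ∀ n : ℤ, fourierCoeff F n
      = (1/(2*π) : ℝ) • ∫ x in (0:ℝ)..(2*π),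
          Complex.exp (((-n:ℤ):ℂ) * x * Complex.I) * Φ x := by
    intro n
    rw [fourierCoeff_eq_intervalIntegral F n 0, zero_add]
    congr 1
    refine intervalIntegral.integral_congr_ae ?_
    have hae : ∀ᵐ x : ℝ, x ∉ ({2*π} : Set ℝ) :=
      measure_eq_zero_iff_ae_notMem.mp (by simp)
    filter_upwards [hae] with x hx hmem
    rw [Set.uIoc_of_le h2π.le] at hmem
    have hx' : x ∈ Set.Ico (0:ℝ) (2*π) :=
      ⟨hmem.1.le, lt_of_le_of_ne hmem.2 (fun hc => hx (by simp [hc]))⟩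
    rw [hF, AddCircle.liftIco_zero_coe_apply hx', smul_eq_mul]
    congr 1
    rw [fourier_coe_apply]
    congr 1
    have hπ : ((π:ℂ)) ≠ 0 := Complex.ofReal_ne_zero.mpr Real.pi_ne_zero
    push_cast
    field_simp
  -- interchange of sum and integral
  have hwcont : ∀ (n : ℤ) (k : ℕ), Continuous (w n k) := by
    intro n k
    rw [hwdef]
    fun_prop
  have hnconj : ∀ k : ℕ, ‖(starRingEnd ℂ) (b k)‖ = ‖b k‖ := fun k => RCLike.norm_conj _
  have hterm_norm : ∀ (n : ℤ) (k : ℕ) (x : ℝ), ‖w n k x‖ ≤ (‖a k‖ + ‖b k‖) * ρ^k := by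
    intro n k x
    refine (norm_add_le _ _).trans ?_
    rw [norm_mul, norm_mul, norm_mul, norm_mul, aux_norm_exp, aux_norm_exp, mul_one, mul_one,
      norm_pow, Complex.norm_real, Real.norm_eq_abs, _root_.abs_of_nonneg hρ0.le, hnconj,
      add_mul]
  have hswap : ∀ n : ℤ, (∫ x in (0:ℝ)..(2*π), Complex.exp (((-n:ℤ):ℂ) * x * Complex.I) * Φ x)
      = ∑' k : ℕ, (a k * (ρ:ℂ)^k * (if ((k:ℤ) - n) = 0 then ((2*π:ℝ):ℂ) else 0)
          + (starRingEnd ℂ) (b k) * (ρ:ℂ)^k * (if (-(k:ℤ) - n) = 0 then ((2*π:ℝ):ℂ) else 0)) := by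
    intro n
    rw [intervalIntegral.integral_of_le h2π.le]
    have step1 : (∫ x in Set.Ioc (0:ℝ) (2*π), Complex.exp (((-n:ℤ):ℂ) * x * Complex.I) * Φ x)
        = ∫ x in Set.Ioc (0:ℝ) (2*π), ∑' k : ℕ, w n k x :=
      integral_congr_ae (Filter.Eventually.of_forall fun x => ((hΦsum n x).tsum_eq).symm)
    have hmeas : ∀ k : ℕ, AEStronglyMeasurable (w n k)
        (volume.restrict (Set.Ioc (0:ℝ) (2*π))) :=
      fun k => ((hwcont n k).aestronglyMeasurable)
    have hbnd : (∑' k : ℕ, ∫⁻ x, ‖w n k x‖₊ ∂(volume.restrict (Set.Ioc (0:ℝ) (2*π)))) ≠ ⊤ := by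
      have hle : ∀ k : ℕ, (∫⁻ x, ‖w n k x‖₊ ∂(volume.restrict (Set.Ioc (0:ℝ) (2*π))))
          ≤ ENNReal.ofReal ((‖a k‖ + ‖b k‖) * ρ^k) * ENNReal.ofReal (2*π) := by
        intro k
        have hp : ∀ x : ℝ, (‖w n k x‖₊ : ℝ≥0∞) ≤ ENNReal.ofReal ((‖a k‖ + ‖b k‖) * ρ^k) :=
          fun x => by
            rw [← ENNReal.ofReal_coe_nnreal, coe_nnnorm]
            exact ENNReal.ofReal_le_ofReal (hterm_norm n k x)
        calc (∫⁻ x, ‖w n k x‖₊ ∂(volume.restrict (Set.Ioc (0:ℝ) (2*π))))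
            ≤ ∫⁻ _x, ENNReal.ofReal ((‖a k‖ + ‖b k‖) * ρ^k)
                ∂(volume.restrict (Set.Ioc (0:ℝ) (2*π))) := lintegral_mono hp
          _ = ENNReal.ofReal ((‖a k‖ + ‖b k‖) * ρ^k)
                * (volume.restrict (Set.Ioc (0:ℝ) (2*π))) Set.univ := lintegral_const _
          _ = ENNReal.ofReal ((‖a k‖ + ‖b k‖) * ρ^k) * ENNReal.ofReal (2*π) := by
              rw [Measure.restrict_apply_univ, Real.volume_Ioc, sub_zero]
      refine ne_top_of_le_ne_top ?_ (ENNReal.tsum_le_tsum hle)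
      rw [ENNReal.tsum_mul_right]
      refine ENNReal.mul_ne_top ?_ ENNReal.ofReal_ne_top
      rw [← ENNReal.ofReal_tsum_of_nonneg (fun k => by positivity) ?_]
      · exact ENNReal.ofReal_ne_top
      · have := hsa.add hsb
        refine this.congr fun k => ?_
        ring
    rw [step1, integral_tsum hmeas hbnd]
    refine tsum_congr fun k => ?_
    have int1 : IntegrableOn
        (fun x : ℝ => a k * (ρ:ℂ)^k * Complex.exp ((((k:ℤ) - n : ℤ):ℂ) * x * Complex.I))
        (Set.Ioc (0:ℝ) (2*π)) volume := (by fun_prop : Continuous _).integrableOn_Ioc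
    have int2 : IntegrableOn
        (fun x : ℝ => (starRingEnd ℂ) (b k) * (ρ:ℂ)^k
          * Complex.exp (((-(k:ℤ) - n : ℤ):ℂ) * x * Complex.I))
        (Set.Ioc (0:ℝ) (2*π)) volume := (by fun_prop : Continuous _).integrableOn_Ioc
    rw [hwdef]
    rw [integral_add int1 int2, integral_const_mul, integral_const_mul]
    rw [← intervalIntegral.integral_of_le h2π.le, ← intervalIntegral.integral_of_le h2π.le]
    rw [aux_integral_exp, aux_integral_exp]
  -- the coefficient values
  have hcpos : ∀ m : ℕ, fourierCoeff F ((m+1 : ℕ) : ℤ) = a (m+1) * (ρ:ℂ)^(m+1) := by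
    intro m
    rw [hFC, hswap]
    rw [tsum_eq_single (m+1) ?_]
    · rw [if_pos (by omega), if_neg (by omega), mul_zero, add_zero]
      rw [Complex.real_smul]
      push_cast
      have hπ : ((π:ℂ)) ≠ 0 := Complex.ofReal_ne_zero.mpr Real.pi_ne_zero
      field_simp
    · intro k hk
      rw [if_neg (by omega), if_neg (by omega), mul_zero, mul_zero, add_zero]
  have hcneg : ∀ m : ℕ, fourierCoeff F (-((m+1 : ℕ) : ℤ))
      = (starRingEnd ℂ) (b (m+1)) * (ρ:ℂ)^(m+1) := by
    intro m
    rw [hFC, hswap]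
    rw [tsum_eq_single (m+1) ?_]
    · rw [if_neg (by omega), if_pos (by omega), mul_zero, zero_add]
      rw [Complex.real_smul]
      push_cast
      have hπ : ((π:ℂ)) ≠ 0 := Complex.ofReal_ne_zero.mpr Real.pi_ne_zero
      field_simp
    · intro k hk
      rw [if_neg (by omega), if_neg (by omega), mul_zero, mul_zero, add_zero]
  -- Parseval
  haveI : Fact ((1:ℝ≥0∞) ≤ 2) := ⟨by norm_num⟩
  set fC : C(AddCircle (2*π), ℂ) := ⟨F, hFcont⟩ with hfC
  set fL := ContinuousMap.toLp (E := ℂ) 2 AddCircle.haarAddCircle ℂ fC with hfL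
  have hcoe : ∀ i : ℤ, fourierCoeff ((fL : Lp ℂ 2 AddCircle.haarAddCircle) : AddCircle (2*π) → ℂ) i
      = fourierCoeff F i := fun i => fourierCoeff_toLp fC i
  have hpars := tsum_sq_fourierCoeff fL
  simp only [hcoe] at hpars
  have hsum2 : Summable (fun i : ℤ => ‖fourierCoeff F i‖^2) := by
    have hm := lp.memℓp (fourierBasis.repr fL)
    have hsm := hm.summable (by norm_num : 0 < (2:ℝ≥0∞).toReal)
    refine hsm.congr fun i => ?_
    rw [fourierBasis_repr, hcoe i]
    generalize ‖fourierCoeff F i‖ = t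
    rw [show ((2:ℝ≥0∞)).toReal = ((2:ℕ):ℝ) by norm_num, Real.rpow_natCast]
  have hintle : (∫ t, ‖((fL : Lp ℂ 2 AddCircle.haarAddCircle) : AddCircle (2*π) → ℂ) t‖^2
      ∂AddCircle.haarAddCircle) ≤ 1 := by
    have hae : ((fL : Lp ℂ 2 AddCircle.haarAddCircle) : AddCircle (2*π) → ℂ)
        =ᵐ[AddCircle.haarAddCircle] F := by
      rw [hfL]
      exact ContinuousMap.coeFn_toLp (p := 2) AddCircle.haarAddCircle (𝕜 := ℂ) fC
    have h1 : (∫ t, ‖((fL : Lp ℂ 2 AddCircle.haarAddCircle) : AddCircle (2*π) → ℂ) t‖^2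
        ∂AddCircle.haarAddCircle) = ∫ t, ‖F t‖^2 ∂AddCircle.haarAddCircle :=
      integral_congr_ae (hae.mono fun t ht => by
        change ‖_‖^2 = ‖F t‖^2
        rw [ht])
    rw [h1]
    have hb1 : ∀ᵐ t ∂(AddCircle.haarAddCircle : Measure (AddCircle (2*π))),
        ‖(‖F t‖^2 : ℝ)‖ ≤ 1 := by
      refine Filter.Eventually.of_forall fun t => ?_
      rw [Real.norm_eq_abs, _root_.abs_of_nonneg (sq_nonneg _)]
      have := hFb t
      nlinarith [norm_nonneg (F t)]
    have := norm_integral_le_of_norm_le_const hb1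
    calc (∫ t, ‖F t‖^2 ∂AddCircle.haarAddCircle)
        ≤ ‖∫ t, ‖F t‖^2 ∂AddCircle.haarAddCircle‖ := le_abs_self _
      _ ≤ 1 * (AddCircle.haarAddCircle Set.univ).toReal := this
      _ = 1 := by simp
  have hParsLe : (∑' i : ℤ, ‖fourierCoeff F i‖^2) ≤ 1 := hpars ▸ hintle
  -- transfer to the finset
  classical
  set t1 : Finset ℤ := s.image (fun k : ℕ => ((k:ℤ) + 1)) with ht1
  set t2 : Finset ℤ := s.image (fun k : ℕ => -((k:ℤ) + 1)) with ht2
  have hdisj : Disjoint t1 t2 := by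
    rw [Finset.disjoint_left]
    intro n hn1 hn2
    rw [ht1, Finset.mem_image] at hn1
    rw [ht2, Finset.mem_image] at hn2
    obtain ⟨k, _, rfl⟩ := hn1
    obtain ⟨l, _, hl⟩ := hn2
    omega
  have key := Summable.sum_le_tsum (t1 ∪ t2) (fun i _ => sq_nonneg _) hsum2
  rw [Finset.sum_union hdisj] at key
  have e1 : (∑ n ∈ t1, ‖fourierCoeff F n‖^2) = ∑ k ∈ s, ‖a (k+1)‖^2 * (ρ^(k+1))^2 := by
    rw [ht1, Finset.sum_image (by intro x _ y _ hxy; simpa using hxy)]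
    refine Finset.sum_congr rfl fun k _ => ?_
    rw [show ((k:ℤ) + 1) = ((k+1 : ℕ) : ℤ) by push_cast; ring, hcpos k]
    rw [norm_mul, norm_pow, Complex.norm_real, Real.norm_eq_abs,
      _root_.abs_of_nonneg hρ0.le, mul_pow]
  have e2 : (∑ n ∈ t2, ‖fourierCoeff F n‖^2) = ∑ k ∈ s, ‖b (k+1)‖^2 * (ρ^(k+1))^2 := by
    rw [ht2, Finset.sum_image (by intro x _ y _ hxy; simpa using hxy)]
    refine Finset.sum_congr rfl fun k _ => ?_
    rw [show (-((k:ℤ) + 1)) = -((k+1 : ℕ) : ℤ) by push_cast; ring, hcneg k]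
    rw [norm_mul, norm_pow, Complex.norm_real, Real.norm_eq_abs,
      _root_.abs_of_nonneg hρ0.le, RCLike.norm_conj, mul_pow]
  calc (∑ k ∈ s, (‖a (k+1)‖^2 + ‖b (k+1)‖^2) * (ρ^(k+1))^2)
      = (∑ n ∈ t1, ‖fourierCoeff F n‖^2) + ∑ n ∈ t2, ‖fourierCoeff F n‖^2 := by
        rw [e1, e2, ← Finset.sum_add_distrib]
        exact Finset.sum_congr rfl fun k _ => by ring
    _ ≤ ∑' i : ℤ, ‖fourierCoeff F i‖^2 := key
    _ ≤ 1 := hParsLe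

/-- Letting ρ → 1 in the Parseval bound. -/
lemma aux_parseval_limit
    (a b : ℕ → ℂ) (h g : ℂ → ℂ)
    (hh : ∀ z : ℂ, ‖z‖ < 1 → HasSum (fun k : ℕ => a k * z ^ k) (h z))
    (hg : ∀ z : ℂ, ‖z‖ < 1 → HasSum (fun k : ℕ => b k * z ^ k) (g z))
    (hbound : ∀ z : ℂ, ‖z‖ < 1 → ‖h z + (starRingEnd ℂ) (g z)‖ ≤ 1)
    (s : Finset ℕ) :
    ∑ k ∈ s, (‖a (k+1)‖^2 + ‖b (k+1)‖^2) ≤ 1 := by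
  have hcont : Continuous fun ρ : ℝ =>
      ∑ k ∈ s, (‖a (k+1)‖^2 + ‖b (k+1)‖^2) * (ρ^(k+1))^2 :=
    continuous_finset_sum _ fun k _ => by fun_prop
  have htend : Filter.Tendsto
      (fun ρ : ℝ => ∑ k ∈ s, (‖a (k+1)‖^2 + ‖b (k+1)‖^2) * (ρ^(k+1))^2)
      (nhdsWithin (1:ℝ) (Set.Iio 1))
      (nhds (∑ k ∈ s, (‖a (k+1)‖^2 + ‖b (k+1)‖^2))) := by
    have h1 := hcont.tendsto 1
    simp only [one_pow, mul_one] at h1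
    exact h1.mono_left nhdsWithin_le_nhds
  refine le_of_tendsto htend ?_
  filter_upwards [Ioo_mem_nhdsLT_of_mem (show (1:ℝ) ∈ Set.Ioc 0 1 by norm_num)] with ρ hρ
  exact aux_parseval a b h g hh hg hbound ρ hρ.1 hρ.2 s

/-- `p`-Bohr radius for bounded harmonic mappings vanishing at the origin:
for `p ≥ 2` the `p`-Bohr radius is `1/√2`. -/
theorem harmonic_p_bohr_radius_ge_two
    (a b : ℕ → ℂ) (h g : ℂ → ℂ)
    (hh : ∀ z : ℂ, ‖z‖ < 1 → HasSum (fun k : ℕ => a k * z ^ k) (h z))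
    (hg : ∀ z : ℂ, ‖z‖ < 1 → HasSum (fun k : ℕ => b k * z ^ k) (g z))
    (ha0 : a 0 = 0) (hb0 : b 0 = 0)
    (hbound : ∀ z : ℂ, ‖z‖ < 1 → ‖h z + (starRingEnd ℂ) (g z)‖ ≤ 1) :
    ∀ p : ℝ, 2 ≤ p → ∀ r : ℝ, 0 ≤ r → r ≤ 1 / Real.sqrt 2 →
      (∑' k : ℕ, (‖a (k + 1)‖ ^ p + ‖b (k + 1)‖ ^ p) ^ (1 / p) * r ^ (k + 1)) ≤ 1 := by
  intro p hp r hr0 hr1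
  have hr2 : r^2 ≤ 1/2 := by
    have h1 : r * r ≤ (1/Real.sqrt 2) * (1/Real.sqrt 2) :=
      mul_le_mul hr1 hr1 hr0 (by positivity)
    calc r^2 = r * r := sq r
      _ ≤ (1/Real.sqrt 2) * (1/Real.sqrt 2) := h1
      _ = 1/2 := by
        rw [div_mul_div_comm, one_mul, Real.mul_self_sqrt (by norm_num : (0:ℝ) ≤ 2)]
  refine tsum_le_of_sum_le' zero_le_one fun s => ?_
  have hstep1 : ∀ k : ℕ, (‖a (k+1)‖ ^ p + ‖b (k+1)‖ ^ p) ^ (1/p) * r^(k+1)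
      ≤ Real.sqrt (‖a (k+1)‖^2 + ‖b (k+1)‖^2) * r^(k+1) := fun k =>
    mul_le_mul_of_nonneg_right
      (aux_rpow_le_sqrt (norm_nonneg _) (norm_nonneg _) hp) (by positivity)
  refine le_trans (Finset.sum_le_sum fun k _ => hstep1 k) ?_
  have hM0 : (0:ℝ) ≤ ∑ k ∈ s, Real.sqrt (‖a (k+1)‖^2 + ‖b (k+1)‖^2) * r^(k+1) :=
    Finset.sum_nonneg fun k _ => by positivity
  have hCS := Finset.sum_mul_sq_le_sq_mul_sq s
    (fun k => Real.sqrt (‖a (k+1)‖^2 + ‖b (k+1)‖^2)) (fun k => r^(k+1))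
  have hsq : (∑ k ∈ s, (Real.sqrt (‖a (k+1)‖^2 + ‖b (k+1)‖^2))^2)
      = ∑ k ∈ s, (‖a (k+1)‖^2 + ‖b (k+1)‖^2) :=
    Finset.sum_congr rfl fun k _ => Real.sq_sqrt (by positivity)
  have hA : (∑ k ∈ s, (Real.sqrt (‖a (k+1)‖^2 + ‖b (k+1)‖^2))^2) ≤ 1 := by
    rw [hsq]; exact aux_parseval_limit a b h g hh hg hbound s
  have hgeo : (∑ k ∈ s, ((r:ℝ)^(k+1))^2) ≤ 1 := by
    have hrlt : r^2 < 1 := lt_of_le_of_lt hr2 (by norm_num)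
    have hsum : Summable (fun k : ℕ => (r^2)^(k+1)) :=
      ((summable_geometric_of_lt_one (by positivity) hrlt).mul_left (r^2)).congr
        fun k => (pow_succ' _ _).symm
    calc (∑ k ∈ s, ((r:ℝ)^(k+1))^2)
        = ∑ k ∈ s, (r^2)^(k+1) := Finset.sum_congr rfl fun k _ => by
          rw [← pow_mul, ← pow_mul, mul_comm]
      _ ≤ ∑' k : ℕ, (r^2)^(k+1) := Summable.sum_le_tsum s (fun i _ => by positivity) hsum
      _ = r^2 * ∑' k : ℕ, (r^2)^k := by
          rw [← tsum_mul_left]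
          exact tsum_congr fun k => pow_succ' _ _
      _ = r^2 * (1 - r^2)⁻¹ := by
          rw [tsum_geometric_of_lt_one (by positivity) hrlt]
      _ ≤ 1 := by
          have h12 : (0:ℝ) < 1 - r^2 := by linarith
          rw [inv_eq_one_div, mul_one_div, div_le_one h12]
          linarith
  have h2 : (∑ k ∈ s, Real.sqrt (‖a (k+1)‖^2 + ‖b (k+1)‖^2) * r^(k+1))^2 ≤ 1 := by
    calc (∑ k ∈ s, Real.sqrt (‖a (k+1)‖^2 + ‖b (k+1)‖^2) * r^(k+1))^2
        ≤ (∑ k ∈ s, (Real.sqrt (‖a (k+1)‖^2 + ‖b (k+1)‖^2))^2)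
          * ∑ k ∈ s, ((r:ℝ)^(k+1))^2 := hCS
      _ ≤ 1 * 1 := mul_le_mul hA hgeo (Finset.sum_nonneg fun k _ => sq_nonneg _)
          (by norm_num)
      _ = 1 := by norm_num
  nlinarith [hM0, h2]
end

section
/- Let h(z) = ∑_{k=0}^∞ a_k z^k and g(z) = ∑_{k=1}^∞ b_k z^k be analytic on the unit disk 𝔻 with g(0) = 0, and suppose the harmonic mapping f(z) = h(z) + conj(g(z)) satisfies |f(z)| ≤ 1 for all z ∈ 𝔻 and |a_0| < 1. Then for every real p with 1 ≤ p ≤ 2, |a_0| + ∑_{k=1}^∞ (|a_k|^p + |b_k|^p)^{1/p} · r^k ≤ 1 for all r with 0 ≤ r ≤ √((1 − |a_0|)/(2^{(2/p) − 1} + 1 + (2^{(2/p) − 1} − 1)|a_0|)). Moreover, for every real p ≥ 2, the same inequality holds for all r with 0 ≤ r ≤ √((1 − |a_0|)/2). -/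
set_option maxHeartbeats 1000000

open MeasureTheory Complex Real AddCircle


lemma fourierCoeff_fourier_eq {T : ℝ} [hT : Fact (0 < T)] (n m : ℤ) :
    fourierCoeff (⇑(fourier n) : AddCircle T → ℂ) m = if m = n then 1 else 0 := by
  have horth := orthonormal_fourier (T := T)
  rw [orthonormal_iff_ite] at horth
  have h2 := horth m n
  rw [ContinuousMap.inner_toLp] at h2
  rw [fourierCoeff]
  simp_rw [smul_eq_mul, fourier_neg]
  simpa only [mul_comm] using h2

lemma norm_fourier_apply {T : ℝ} [hT : Fact (0 < T)] (n : ℤ) (t : AddCircle T) :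
    ‖fourier n t‖ = 1 := by
  rw [fourier_apply]; exact Circle.norm_coe _

lemma parseval_tsum {T : ℝ} [hT : Fact (0 < T)] (c : ℤ → ℂ)
    (hc : Summable fun n => ‖c n‖)
    (hbd : ∀ t : AddCircle T, ‖∑' n : ℤ, c n * fourier n t‖ ≤ 1) :
    ∑' n : ℤ, ‖c n‖ ^ 2 ≤ 1 := by
  have hcont : Continuous fun t : AddCircle T => ∑' n : ℤ, c n * fourier n t := by
    refine continuous_tsum (fun n => continuous_const.mul (fourier n).continuous) hc ?_
    intro n t
    rw [norm_mul, norm_fourier_apply, mul_one]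
  set F : C(AddCircle T, ℂ) := ⟨fun t => ∑' n : ℤ, c n * fourier n t, hcont⟩ with hF
  have hFc : ∀ m : ℤ, fourierCoeff (⇑F) m = c m := by
    intro m
    have h1 : ∀ t : AddCircle T,
        fourier (-m) t • F t = ∑' n : ℤ, c n * (fourier (-m) t * fourier n t) := by
      intro t
      show fourier (-m) t • (∑' n : ℤ, c n * fourier n t) = _
      rw [smul_eq_mul, ← tsum_mul_left]
      exact tsum_congr fun n => by ring
    have hmeas : ∀ n : ℤ, AEStronglyMeasurable
        (fun t : AddCircle T => c n * (fourier (-m) t * fourier n t)) haarAddCircle :=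
      fun n => (continuous_const.mul ((fourier (-m)).continuous.mul
        (fourier n).continuous)).aestronglyMeasurable
    have hnorm : ∀ (n : ℤ) (t : AddCircle T), ‖c n * (fourier (-m) t * fourier n t)‖ = ‖c n‖ := by
      intro n t
      rw [norm_mul, norm_mul, norm_fourier_apply, norm_fourier_apply]; ring
    have hlint : (∑' n : ℤ, ∫⁻ t : AddCircle T, ‖c n * (fourier (-m) t * fourier n t)‖₊ ∂haarAddCircle) ≠ ⊤ := by
      have : ∀ n : ℤ, (∫⁻ t : AddCircle T, ‖c n * (fourier (-m) t * fourier n t)‖₊ ∂haarAddCircle)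
          = (‖c n‖₊ : ENNReal) := by
        intro n
        have : (fun t : AddCircle T => (‖c n * (fourier (-m) t * fourier n t)‖₊ : ENNReal))
            = fun _ => (‖c n‖₊ : ENNReal) := by
          funext t
          congr 1
          ext
          exact hnorm n t
        rw [this, lintegral_const, measure_univ, mul_one]
      rw [tsum_congr this]
      exact (ENNReal.tsum_coe_ne_top_iff_summable).2 (by simpa [← NNReal.summable_coe] using hc)
    have h2 : fourierCoeff (⇑F) m
        = ∑' n : ℤ, ∫ t : AddCircle T, c n * (fourier (-m) t * fourier n t) ∂haarAddCircle := by
      rw [fourierCoeff]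
      simp_rw [h1]
      exact integral_tsum hmeas hlint
    rw [h2]
    have h3 : ∀ n : ℤ, (∫ t : AddCircle T, c n * (fourier (-m) t * fourier n t) ∂haarAddCircle)
        = c n * (if m = n then 1 else 0) := by
      intro n
      rw [MeasureTheory.integral_const_mul]
      congr 1
      rw [← fourierCoeff_fourier_eq (T := T) n m, fourierCoeff]
      simp_rw [smul_eq_mul]
    rw [tsum_congr h3]
    rw [tsum_eq_single m (fun n hn => by simp [Ne.symm hn])]
    simp
  have hP := tsum_sq_fourierCoeff (ContinuousMap.toLp (E := ℂ) 2 haarAddCircle ℂ F)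
  simp_rw [fourierCoeff_toLp, hFc] at hP
  rw [hP]
  have hae : (fun t => ‖(ContinuousMap.toLp (E := ℂ) 2 haarAddCircle ℂ F) t‖ ^ 2)
      =ᵐ[haarAddCircle] fun t => ‖F t‖ ^ 2 := by
    filter_upwards [ContinuousMap.coeFn_toLp (p := 2) (𝕜 := ℂ) haarAddCircle F] with t ht
    rw [ht]
  rw [integral_congr_ae hae]
  calc ∫ t, ‖F t‖ ^ 2 ∂haarAddCircle ≤ ∫ _, (1 : ℝ) ∂haarAddCircle := by
        refine integral_mono_of_nonneg (Filter.Eventually.of_forall fun t => by positivity)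
          (integrable_const 1) (Filter.Eventually.of_forall fun t => ?_)
        have := hbd t
        have h1 : ‖F t‖ ^ 2 ≤ 1 ^ 2 := by
          apply pow_le_pow_left₀ (norm_nonneg _) this
        simpa using h1
    _ = 1 := by simp


lemma sq_summable_of_norm_summable {f : ℕ → ℝ} (h0 : ∀ k, 0 ≤ f k) (hf : Summable f) :
    Summable fun k => f k ^ 2 := by
  refine Summable.of_nonneg_of_le (fun k => by positivity) (fun k => ?_) (hf.mul_left (∑' k, f k))
  have h1 : f k ≤ ∑' k, f k := Summable.le_tsum hf k fun j _ => h0 j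
  calc f k ^ 2 = f k * f k := sq (f k) ▸ by ring
    _ ≤ (∑' k, f k) * f k := by
        apply mul_le_mul_of_nonneg_right h1 (h0 k)

lemma disk_parseval_rho (a b : ℕ → ℂ) (h g : ℂ → ℂ)
    (hh : ∀ z : ℂ, ‖z‖ < 1 → HasSum (fun k : ℕ => a k * z ^ k) (h z))
    (hg : ∀ z : ℂ, ‖z‖ < 1 → HasSum (fun k : ℕ => b k * z ^ k) (g z))
    (hb0 : b 0 = 0)
    (hbound : ∀ z : ℂ, ‖z‖ < 1 → ‖h z + (starRingEnd ℂ) (g z)‖ ≤ 1)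
    (ρ : ℝ) (hρ0 : 0 < ρ) (hρ1 : ρ < 1) (N : ℕ) :
    ‖a 0‖ ^ 2 + ∑ k ∈ Finset.range N,
      (‖a (k + 1)‖ ^ 2 + ‖b (k + 1)‖ ^ 2) * ρ ^ (2 * (k + 1)) ≤ 1 := by
  haveI : Fact (0 < 2 * π) := ⟨by positivity⟩
  have hρC : ‖(ρ : ℂ)‖ = ρ := by
    rw [Complex.norm_real, Real.norm_of_nonneg hρ0.le]
  have hρC1 : ‖(ρ : ℂ)‖ < 1 := by rw [hρC]; exact hρ1
  set c : ℤ → ℂ := fun n => match n with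
    | Int.ofNat k => a k * (ρ : ℂ) ^ k
    | Int.negSucc k => (starRingEnd ℂ) (b (k + 1)) * (ρ : ℂ) ^ (k + 1) with hc_def
  have hcnat : ∀ k : ℕ, c k = a k * (ρ : ℂ) ^ k := fun k => rfl
  have hcneg : ∀ k : ℕ, c (-(k + 1) : ℤ) = (starRingEnd ℂ) (b (k + 1)) * (ρ : ℂ) ^ (k + 1) := by
    intro k
    rw [← Int.negSucc_eq]
  -- summability
  have hsa : Summable fun k : ℕ => ‖a k * (ρ : ℂ) ^ k‖ :=
    summable_norm_iff.mpr (hh ρ hρC1).summable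
  have hsb : Summable fun k : ℕ => ‖b k * (ρ : ℂ) ^ k‖ :=
    summable_norm_iff.mpr (hg ρ hρC1).summable
  have hsb' : Summable fun k : ℕ => ‖b (k + 1) * (ρ : ℂ) ^ (k + 1)‖ := by
    exact_mod_cast (summable_nat_add_iff 1).mpr hsb
  have hc : Summable fun n : ℤ => ‖c n‖ := by
    apply Summable.of_nat_of_neg_add_one
    · simpa only [hcnat] using hsa
    · convert hsb' using 2 with k
      rw [hcneg k, norm_mul, norm_mul, Complex.norm_conj]
  -- boundedness of the Fourier series
  have hbd : ∀ t : AddCircle (2 * π), ‖∑' n : ℤ, c n * fourier n t‖ ≤ 1 := by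
    intro t
    induction t using QuotientAddGroup.induction_on with
    | H x =>
      set z : ℂ := ρ * Complex.exp (x * Complex.I) with hz_def
      have hznorm : ‖z‖ < 1 := by
        rw [hz_def, norm_mul, hρC, Complex.norm_exp_ofReal_mul_I, mul_one]
        exact hρ1
      have hfou : ∀ n : ℤ, fourier n (↑x : AddCircle (2 * π))
          = Complex.exp ((n * x) * Complex.I) := by
        intro n
        rw [fourier_coe_apply]
        congr 1
        have hπ : (π : ℂ) ≠ 0 := by exact_mod_cast Real.pi_ne_zero
        push_cast
        field_simp
      have hpos : HasSum (fun k : ℕ => c k * fourier (k : ℤ) (↑x : AddCircle (2 * π))) (h z) := by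
        have := hh z hznorm
        convert this using 2 with k
        rw [hcnat, hfou, hz_def, mul_pow, ← Complex.exp_nat_mul]
        push_cast
        ring_nf
      have hneg : HasSum (fun k : ℕ => c (-(k + 1) : ℤ) * fourier (-(k + 1) : ℤ)
          (↑x : AddCircle (2 * π))) ((starRingEnd ℂ) (g z)) := by
        have h1 : HasSum (fun k : ℕ => b (k + 1) * z ^ (k + 1)) (g z) := by
          refine (hasSum_nat_add_iff (f := fun k : ℕ => b k * z ^ k) 1).mpr ?_
          simpa [hb0] using hg z hznorm
        have h3 := h1.map (starRingEnd ℂ) Complex.conjCLE.continuous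
        convert h3 using 2 with k
        simp only [Function.comp_apply]
        rw [hcneg, hfou, map_mul, map_pow, hz_def, map_mul, Complex.conj_ofReal,
          ← Complex.exp_conj, map_mul, Complex.conj_ofReal, Complex.conj_I, mul_pow,
          ← Complex.exp_nat_mul]
        push_cast
        ring_nf
      have htot : HasSum (fun n : ℤ => c n * fourier n (↑x : AddCircle (2 * π)))
          (h z + (starRingEnd ℂ) (g z)) := HasSum.of_nat_of_neg_add_one hpos hneg
      rw [htot.tsum_eq]
      exact hbound z hznorm
  have hP := parseval_tsum c hc hbd
  -- summability of squares
  have t1 : Summable fun k : ℕ => ‖c (k : ℤ)‖ ^ 2 :=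
    sq_summable_of_norm_summable (fun k => norm_nonneg _) (by simpa only [hcnat] using hsa)
  have t2 : Summable fun k : ℕ => ‖c (-(k + 1) : ℤ)‖ ^ 2 := by
    apply sq_summable_of_norm_summable (fun k => norm_nonneg _)
    convert hsb' using 2 with k
    rw [hcneg k, norm_mul, norm_mul, Complex.norm_conj]
  have hsplit : (∑' k : ℕ, ‖c (k : ℤ)‖ ^ 2) + (∑' k : ℕ, ‖c (-(k + 1) : ℤ)‖ ^ 2)
      = ∑' n : ℤ, ‖c n‖ ^ 2 := (tsum_of_nat_of_neg_add_one (f := fun n : ℤ => ‖c n‖ ^ 2) t1 t2).symm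
  have hposbound : ‖a 0‖ ^ 2 + ∑ k ∈ Finset.range N, ‖a (k + 1)‖ ^ 2 * ρ ^ (2 * (k + 1))
      ≤ ∑' k : ℕ, ‖c (k : ℤ)‖ ^ 2 := by
    have := Summable.sum_le_tsum (Finset.range (N + 1)) (fun k _ => by positivity) t1
    rw [Finset.sum_range_succ'] at this
    refine le_trans (le_of_eq ?_) this
    rw [add_comm]
    congr 1
    · apply Finset.sum_congr rfl
      intro k _
      rw [hcnat, norm_mul, norm_pow, hρC, mul_pow, ← pow_mul, mul_comm (k+1) 2]
    · rw [hcnat, pow_zero, mul_one]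
  have hnegbound : ∑ k ∈ Finset.range N, ‖b (k + 1)‖ ^ 2 * ρ ^ (2 * (k + 1))
      ≤ ∑' k : ℕ, ‖c (-(k + 1) : ℤ)‖ ^ 2 := by
    refine le_trans (le_of_eq ?_) (Summable.sum_le_tsum (Finset.range N) (fun k _ => by positivity) t2)
    apply Finset.sum_congr rfl
    intro k _
    rw [hcneg, norm_mul, norm_pow, hρC, Complex.norm_conj, mul_pow, ← pow_mul,
      mul_comm (k+1) 2]
  have hdist : ∑ k ∈ Finset.range N, (‖a (k + 1)‖ ^ 2 + ‖b (k + 1)‖ ^ 2) * ρ ^ (2 * (k + 1))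
      = (∑ k ∈ Finset.range N, ‖a (k + 1)‖ ^ 2 * ρ ^ (2 * (k + 1)))
        + ∑ k ∈ Finset.range N, ‖b (k + 1)‖ ^ 2 * ρ ^ (2 * (k + 1)) := by
    rw [← Finset.sum_add_distrib]
    exact Finset.sum_congr rfl fun k _ => by ring
  rw [hdist, ← add_assoc]
  calc (‖a 0‖ ^ 2 + ∑ k ∈ Finset.range N, ‖a (k + 1)‖ ^ 2 * ρ ^ (2 * (k + 1)))
        + ∑ k ∈ Finset.range N, ‖b (k + 1)‖ ^ 2 * ρ ^ (2 * (k + 1))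
      ≤ (∑' k : ℕ, ‖c (k : ℤ)‖ ^ 2) + (∑' k : ℕ, ‖c (-(k + 1) : ℤ)‖ ^ 2) :=
        add_le_add hposbound hnegbound
    _ = ∑' n : ℤ, ‖c n‖ ^ 2 := hsplit
    _ ≤ 1 := hP


lemma disk_parseval (a b : ℕ → ℂ) (h g : ℂ → ℂ)
    (hh : ∀ z : ℂ, ‖z‖ < 1 → HasSum (fun k : ℕ => a k * z ^ k) (h z))
    (hg : ∀ z : ℂ, ‖z‖ < 1 → HasSum (fun k : ℕ => b k * z ^ k) (g z))
    (hb0 : b 0 = 0)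
    (hbound : ∀ z : ℂ, ‖z‖ < 1 → ‖h z + (starRingEnd ℂ) (g z)‖ ≤ 1)
    (N : ℕ) :
    ∑ k ∈ Finset.range N, (‖a (k + 1)‖ ^ 2 + ‖b (k + 1)‖ ^ 2) ≤ 1 - ‖a 0‖ ^ 2 := by
  rw [← sub_nonneg]
  have key := disk_parseval_rho a b h g hh hg hb0 hbound
  set φ : ℝ → ℝ := fun ρ => ‖a 0‖ ^ 2 + ∑ k ∈ Finset.range N,
      (‖a (k + 1)‖ ^ 2 + ‖b (k + 1)‖ ^ 2) * ρ ^ (2 * (k + 1)) with hφ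
  have hcont : Continuous φ := by
    apply Continuous.add continuous_const
    exact continuous_finset_sum _ fun k _ => continuous_const.mul (continuous_pow _)
  have hφ1 : φ 1 = ‖a 0‖ ^ 2 + ∑ k ∈ Finset.range N, (‖a (k + 1)‖ ^ 2 + ‖b (k + 1)‖ ^ 2) := by
    simp [hφ]
  have htend : Filter.Tendsto φ (nhdsWithin 1 (Set.Iio 1)) (nhds (φ 1)) :=
    (hcont.tendsto 1).mono_left nhdsWithin_le_nhds
  have hle : φ 1 ≤ 1 := by
    refine le_of_tendsto htend ?_
    filter_upwards [Ioo_mem_nhdsLT_of_mem (by norm_num : (1:ℝ) ∈ Set.Ioc 0 1)] with ρ hρ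
    exact key ρ hρ.1 hρ.2 N
  rw [hφ1] at hle
  linarith

lemma final_bound (t u : ℝ) (ht0 : 0 ≤ t) (ht1 : t < 1) (hu : 1 ≤ u)
    (M Q : ℕ → ℝ) (hM0 : ∀ k, 0 ≤ M k) (hQ0 : ∀ k, 0 ≤ Q k)
    (hMQ : ∀ k, M k ^ 2 ≤ u * Q k)
    (hQsum : ∀ N, ∑ k ∈ Finset.range N, Q k ≤ 1 - t ^ 2)
    (r : ℝ) (hr0 : 0 ≤ r)
    (hr2 : r ^ 2 * (u * (1 + t) + (1 - t)) ≤ 1 - t) :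
    t + ∑' k : ℕ, M k * r ^ (k + 1) ≤ 1 := by
  have hD : 2 ≤ u * (1 + t) + (1 - t) := by nlinarith
  have hrlt : r ^ 2 < 1 := by nlinarith [mul_le_mul_of_nonneg_left hD (sq_nonneg r)]
  have hr1 : 0 < 1 - r ^ 2 := by linarith
  set A : ℝ := u * (1 - t ^ 2) with hA
  have ht2 : 0 < 1 - t ^ 2 := by nlinarith
  have hA0 : 0 < A := mul_pos (by linarith) ht2
  set w : ℝ := Real.sqrt (A * (1 - r ^ 2)) with hw
  have hw0 : 0 < w := Real.sqrt_pos.mpr (by positivity)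
  have hw2 : w ^ 2 = A * (1 - r ^ 2) := Real.sq_sqrt (by positivity)
  -- summability facts
  have hQs : Summable Q := summable_of_sum_range_le hQ0 hQsum
  have hM2s : Summable fun k => M k ^ 2 :=
    Summable.of_nonneg_of_le (fun k => sq_nonneg _) hMQ (hQs.mul_left u)
  have hgeo : Summable fun k : ℕ => (r ^ 2) ^ k :=
    summable_geometric_of_lt_one (by positivity) hrlt
  set G : ℕ → ℝ := fun k => M k ^ 2 * r / (2 * w) + w / 2 * (r * (r ^ 2) ^ k) with hG
  have hGs : Summable G := by
    apply Summable.add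
    · exact (hM2s.mul_right r).div_const _
    · exact ((hgeo.mul_left r).mul_left (w / 2))
  have hterm : ∀ k, M k * r ^ (k + 1) ≤ G k := by
    intro k
    have hid : G k - M k * r ^ (k + 1) = r / (2 * w) * (M k - w * r ^ k) ^ 2 := by
      simp only [hG]
      field_simp
      ring
    rw [← sub_nonneg, hid]
    positivity
  have hMs : Summable fun k => M k * r ^ (k + 1) :=
    Summable.of_nonneg_of_le (fun k => mul_nonneg (hM0 k) (pow_nonneg hr0 _)) hterm hGs
  have hS : ∑' k, M k ^ 2 ≤ A := by
    apply Real.tsum_le_of_sum_range_le (fun k => sq_nonneg _)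
    intro N
    calc ∑ k ∈ Finset.range N, M k ^ 2 ≤ ∑ k ∈ Finset.range N, u * Q k :=
          Finset.sum_le_sum fun k _ => hMQ k
      _ = u * ∑ k ∈ Finset.range N, Q k := by rw [Finset.mul_sum]
      _ ≤ u * (1 - t ^ 2) := by
          apply mul_le_mul_of_nonneg_left (hQsum N) (by linarith)
  have hGsum : ∑' k, G k = (∑' k, M k ^ 2) * r / (2 * w) + w / 2 * (r * (1 - r ^ 2)⁻¹) := by
    rw [hG, Summable.tsum_add ((hM2s.mul_right r).div_const _) ((hgeo.mul_left r).mul_left (w / 2))]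
    congr 1
    · rw [tsum_div_const, tsum_mul_right]
    · rw [tsum_mul_left, tsum_mul_left, tsum_geometric_of_lt_one (by positivity) hrlt]
  have hmain : ∑' k, M k * r ^ (k + 1) ≤ w * r / (1 - r ^ 2) := by
    calc ∑' k, M k * r ^ (k + 1) ≤ ∑' k, G k := Summable.tsum_le_tsum hterm hMs hGs
      _ = (∑' k, M k ^ 2) * r / (2 * w) + w / 2 * (r * (1 - r ^ 2)⁻¹) := hGsum
      _ ≤ A * r / (2 * w) + w / 2 * (r * (1 - r ^ 2)⁻¹) := by
          have : (∑' k, M k ^ 2) * r / (2 * w) ≤ A * r / (2 * w) := by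
            apply div_le_div_of_nonneg_right ?_ (by positivity)
            exact mul_le_mul_of_nonneg_right hS hr0
          linarith
      _ = w * r / (1 - r ^ 2) := by
          have : A = w ^ 2 / (1 - r ^ 2) := by
            rw [hw2]; field_simp
          rw [this]
          field_simp
          ring
  have hfin : w * r / (1 - r ^ 2) ≤ 1 - t := by
    rw [div_le_iff₀ hr1]
    have hsq : (w * r) ^ 2 ≤ ((1 - t) * (1 - r ^ 2)) ^ 2 := by
      rw [mul_pow, hw2, hA]
      have hfac : (0:ℝ) ≤ (1 - t) * (1 - r ^ 2) := mul_nonneg (by linarith) hr1.le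
      nlinarith [mul_le_mul_of_nonneg_left hr2 hfac]
    have hY : 0 ≤ (1 - t) * (1 - r ^ 2) := mul_nonneg (by linarith) hr1.le
    exact (pow_le_pow_iff_left₀ (mul_nonneg hw0.le hr0) hY two_ne_zero).mp hsq
  linarith



lemma pm_ge_two {x y p : ℝ} (hx : 0 ≤ x) (hy : 0 ≤ y) (hp : 2 ≤ p) :
    ((x ^ p + y ^ p) ^ (1 / p)) ^ 2 ≤ x ^ 2 + y ^ 2 := by
  have h := NNReal.rpow_add_rpow_le x.toNNReal y.toNNReal (by norm_num : (0:ℝ) < 2) hp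
  have hc := NNReal.coe_le_coe.mpr h
  push_cast [NNReal.coe_rpow, Real.coe_toNNReal x hx, Real.coe_toNNReal y hy] at hc
  have h2 : ((x ^ p + y ^ p) ^ (1 / p)) ^ 2 ≤ ((x ^ (2:ℝ) + y ^ (2:ℝ)) ^ (1 / (2:ℝ))) ^ 2 :=
    pow_le_pow_left₀ (Real.rpow_nonneg (by positivity) _) hc 2
  have h3 : ((x ^ (2:ℝ) + y ^ (2:ℝ)) ^ (1 / (2:ℝ))) ^ 2 = x ^ 2 + y ^ 2 := by
    rw [← Real.rpow_natCast ((x ^ (2:ℝ) + y ^ (2:ℝ)) ^ (1 / (2:ℝ))) 2,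
      ← Real.rpow_mul (by positivity)]
    norm_num
  rw [h3] at h2
  exact h2

lemma pm_le_two {x y p : ℝ} (hx : 0 ≤ x) (hy : 0 ≤ y) (hp1 : 1 ≤ p) (hp2 : p ≤ 2) :
    ((x ^ p + y ^ p) ^ (1 / p)) ^ 2 ≤ 2 ^ (2 / p - 1) * (x ^ 2 + y ^ 2) := by
  have hp0 : 0 < p := by linarith
  have hq : 1 ≤ 2 / p := by rw [le_div_iff₀ hp0]; linarith
  have H := Real.rpow_arith_mean_le_arith_mean_rpow (ι := Bool) Finset.univ
    (fun _ => (1:ℝ)/2) (fun i => if i then x ^ p else y ^ p)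
    (fun i _ => by norm_num) (by simp)
    (fun i _ => by by_cases hi : i <;> simp [hi] <;> positivity) hq
  rw [Fintype.sum_bool, Fintype.sum_bool] at H
  simp only [eq_self_iff_true, if_true, Bool.false_eq_true, if_false] at H
  -- H : (1/2 * x^p + 1/2 * y^p) ^ (2/p) ≤ 1/2 * (x^p)^(2/p) + 1/2 * (y^p)^(2/p)
  have e1 : (x ^ p) ^ (2/p : ℝ) = x ^ (2:ℝ) := by
    rw [← Real.rpow_mul hx]; congr 1; field_simp
  have e2 : (y ^ p) ^ (2/p : ℝ) = y ^ (2:ℝ) := by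
    rw [← Real.rpow_mul hy]; congr 1; field_simp
  have e3 : ((1:ℝ)/2 * x ^ p + 1/2 * y ^ p) ^ (2/p : ℝ)
      = (1/2 : ℝ) ^ (2/p : ℝ) * (x ^ p + y ^ p) ^ (2/p : ℝ) := by
    rw [← Real.mul_rpow (by norm_num) (by positivity)]
    congr 1
    ring
  rw [e1, e2, e3] at H
  have h4 : (x ^ p + y ^ p) ^ (2/p : ℝ)
      ≤ (2:ℝ) ^ (2/p : ℝ) * ((1/2 : ℝ) ^ (2/p : ℝ) * (x ^ p + y ^ p) ^ (2/p : ℝ)) := by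
    rw [← mul_assoc, ← Real.mul_rpow (by norm_num) (by norm_num)]
    norm_num
  have h5 : (x ^ p + y ^ p) ^ (2/p : ℝ)
      ≤ (2:ℝ) ^ (2/p : ℝ) * ((1:ℝ)/2 * x ^ (2:ℝ) + 1/2 * y ^ (2:ℝ)) := by
    refine le_trans h4 ?_
    exact mul_le_mul_of_nonneg_left H (Real.rpow_nonneg (by norm_num) _)
  have e6 : ((x ^ p + y ^ p) ^ (1 / p)) ^ 2 = (x ^ p + y ^ p) ^ (2/p : ℝ) := by
    rw [← Real.rpow_natCast ((x ^ p + y ^ p) ^ (1 / p)) 2, ← Real.rpow_mul (by positivity)]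
    congr 1
    push_cast
    ring
  have e7 : (2:ℝ) ^ (2 / p - 1) = (2:ℝ) ^ (2/p : ℝ) * (1/2 : ℝ) := by
    rw [Real.rpow_sub (by norm_num)]
    norm_num
    ring
  rw [e6, e7]
  calc (x ^ p + y ^ p) ^ (2/p : ℝ)
      ≤ (2:ℝ) ^ (2/p : ℝ) * ((1:ℝ)/2 * x ^ (2:ℝ) + 1/2 * y ^ (2:ℝ)) := h5
    _ = (2:ℝ) ^ (2/p : ℝ) * (1/2) * (x ^ (2:ℝ) + y ^ (2:ℝ)) := by ring
    _ = (2:ℝ) ^ (2/p : ℝ) * (1/2) * (x ^ 2 + y ^ 2) := by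
        rw [← Real.rpow_natCast x 2, ← Real.rpow_natCast y 2]
        norm_num


/-- Corollary 4 of Kayumov–Ponnusamy: `p`-Bohr-type inequality with the constant
term for bounded harmonic mappings `f = h + conj g` with `g(0) = 0`. -/
theorem harmonic_p_bohr_with_constant
    (a b : ℕ → ℂ) (h g : ℂ → ℂ)
    (hh : ∀ z : ℂ, ‖z‖ < 1 → HasSum (fun k : ℕ => a k * z ^ k) (h z))
    (hg : ∀ z : ℂ, ‖z‖ < 1 → HasSum (fun k : ℕ => b k * z ^ k) (g z))
    (hb0 : b 0 = 0)
    (hbound : ∀ z : ℂ, ‖z‖ < 1 → ‖h z + (starRingEnd ℂ) (g z)‖ ≤ 1)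
    (ha0 : ‖a 0‖ < 1) :
    (∀ p : ℝ, 1 ≤ p → p ≤ 2 → ∀ r : ℝ, 0 ≤ r →
      r ≤ Real.sqrt ((1 - ‖a 0‖) /
            ((2 : ℝ) ^ (2 / p - 1) + 1 + ((2 : ℝ) ^ (2 / p - 1) - 1) * ‖a 0‖)) →
      ‖a 0‖ + (∑' k : ℕ, (‖a (k + 1)‖ ^ p + ‖b (k + 1)‖ ^ p) ^ (1 / p) * r ^ (k + 1))
        ≤ 1) ∧
    (∀ p : ℝ, 2 ≤ p → ∀ r : ℝ, 0 ≤ r → r ≤ Real.sqrt ((1 - ‖a 0‖) / 2) →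
      ‖a 0‖ + (∑' k : ℕ, (‖a (k + 1)‖ ^ p + ‖b (k + 1)‖ ^ p) ^ (1 / p) * r ^ (k + 1))
        ≤ 1) := by
  have hQsum : ∀ N, ∑ k ∈ Finset.range N, (‖a (k + 1)‖ ^ 2 + ‖b (k + 1)‖ ^ 2)
      ≤ 1 - ‖a 0‖ ^ 2 := disk_parseval a b h g hh hg hb0 hbound
  have ht0 : (0:ℝ) ≤ ‖a 0‖ := norm_nonneg _
  constructor
  · intro p hp1 hp2 r hr0 hr
    set t : ℝ := ‖a 0‖
    set u : ℝ := (2 : ℝ) ^ (2 / p - 1) with hu_def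
    have hp0 : 0 < p := by linarith
    have hexp : 0 ≤ 2 / p - 1 := by
      rw [sub_nonneg, le_div_iff₀ hp0]; linarith
    have hu : 1 ≤ u := by
      have := Real.rpow_le_rpow_of_exponent_le (x := 2) one_le_two hexp
      simpa using this
    have hden : 0 < u + 1 + (u - 1) * t := by nlinarith
    have hr2' : r ^ 2 ≤ (1 - t) / (u + 1 + (u - 1) * t) :=
      (Real.le_sqrt hr0 (div_nonneg (by linarith) hden.le)).mp hr
    have hr2 : r ^ 2 * (u * (1 + t) + (1 - t)) ≤ 1 - t := by
      have h1 := (le_div_iff₀ hden).mp hr2'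
      nlinarith
    exact final_bound t u ht0 ha0 hu
      (fun k => (‖a (k + 1)‖ ^ p + ‖b (k + 1)‖ ^ p) ^ (1 / p))
      (fun k => ‖a (k + 1)‖ ^ 2 + ‖b (k + 1)‖ ^ 2)
      (fun k => Real.rpow_nonneg (by positivity) _)
      (fun k => by positivity)
      (fun k => pm_le_two (norm_nonneg _) (norm_nonneg _) hp1 hp2)
      hQsum r hr0 hr2
  · intro p hp2 r hr0 hr
    set t : ℝ := ‖a 0‖
    have hr2' : r ^ 2 ≤ (1 - t) / 2 :=
      (Real.le_sqrt hr0 (div_nonneg (by linarith) (by norm_num))).mp hr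
    have hr2 : r ^ 2 * (1 * (1 + t) + (1 - t)) ≤ 1 - t := by
      have h1 := (le_div_iff₀ (by norm_num : (0:ℝ) < 2)).mp hr2'
      nlinarith
    refine final_bound t 1 ht0 ha0 le_rfl
      (fun k => (‖a (k + 1)‖ ^ p + ‖b (k + 1)‖ ^ p) ^ (1 / p))
      (fun k => ‖a (k + 1)‖ ^ 2 + ‖b (k + 1)‖ ^ 2)
      (fun k => Real.rpow_nonneg (by positivity) _)
      (fun k => by positivity)
      (fun k => ?_)
      hQsum r hr0 hr2
    rw [one_mul]
    exact pm_ge_two (norm_nonneg _) (norm_nonneg _) hp2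
end

section
/- Let f(z) = ∑_{k=0}^∞ a_{2k+1} z^{2k+1} + ∑_{k=0}^∞ conj(b_{2k+1} z^{2k+1}) be an odd harmonic function on the unit disk 𝔻 (i.e., f = h + conj(g) with h(z) = ∑_{k=0}^∞ a_{2k+1} z^{2k+1} and g(z) = ∑_{k=0}^∞ b_{2k+1} z^{2k+1} analytic on 𝔻) satisfying |f(z)| < 1 for all z ∈ 𝔻. Then: (i) for every real p with 1 ≤ p ≤ 2 and every r with 0 ≤ r ≤ ρ_p := √(√(4^{(2/p) − 2} + 1) − 2^{(2/p) − 2}), one has ∑_{k=0}^∞ (|a_{2k+1}|^p + |b_{2k+1}|^p)^{1/p} · r^{2k+1} ≤ 2^{(1/p) − 1/2} · r/√(1 − r⁴) ≤ 1; and (ii) for every real p ≥ 2 and every r with 0 ≤ r ≤ √((√5 − 1)/2), one has ∑_{k=0}^∞ (|a_{2k+1}|^p + |b_{2k+1}|^p)^{1/p} · r^{2k+1} ≤ r/√(1 − r⁴) ≤ 1. -/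
open Real
open scoped NNReal

lemma nn_lp_small {u v : ℝ≥0} {p : ℝ} (hp : 1 ≤ p) (hp2 : p ≤ 2) :
    (u ^ p + v ^ p) ^ (1 / p) ≤ (2 : ℝ≥0) ^ (1 / p - 1 / 2) * (u ^ (2:ℝ) + v ^ (2:ℝ)) ^ (1/2 : ℝ) := by
  have hp0 : 0 < p := lt_of_lt_of_le one_pos hp
  have key := NNReal.rpow_add_le_mul_rpow_add_rpow (u ^ p) (v ^ p)
      (p := 2 / p) (by rw [le_div_iff₀ hp0]; linarith)
  have hxx : (u ^ p) ^ (2 / p) = u ^ (2 : ℝ) := by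
    rw [← NNReal.rpow_mul]; congr 1; field_simp
  have hyy : (v ^ p) ^ (2 / p) = v ^ (2 : ℝ) := by
    rw [← NNReal.rpow_mul]; congr 1; field_simp
  rw [hxx, hyy] at key
  have key2 := NNReal.rpow_le_rpow key (by positivity : (0:ℝ) ≤ 1/2)
  rw [← NNReal.rpow_mul, NNReal.mul_rpow, ← NNReal.rpow_mul] at key2
  rw [show 2 / p * (1/2) = 1/p by ring, show (2/p - 1) * (1/2) = 1/p - 1/2 by ring] at key2
  exact key2

lemma lp_bound_small {x y : ℝ} (hx : 0 ≤ x) (hy : 0 ≤ y) {p : ℝ} (hp : 1 ≤ p) (hp2 : p ≤ 2) :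
    (x ^ p + y ^ p) ^ (1 / p) ≤ (2 : ℝ) ^ (1 / p - 1 / 2) * Real.sqrt (x ^ 2 + y ^ 2) := by
  lift x to ℝ≥0 using hx
  lift y to ℝ≥0 using hy
  have := nn_lp_small (u := x) (v := y) hp hp2
  have h2 := NNReal.coe_le_coe.2 this
  push_cast [NNReal.coe_rpow] at h2
  rw [Real.sqrt_eq_rpow]
  convert h2 using 3 <;> rw [← Real.rpow_natCast _ 2] <;> norm_num

lemma lp_bound_big {x y : ℝ} (hx : 0 ≤ x) (hy : 0 ≤ y) {p : ℝ} (hp : 2 ≤ p) :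
    (x ^ p + y ^ p) ^ (1 / p) ≤ Real.sqrt (x ^ 2 + y ^ 2) := by
  lift x to ℝ≥0 using hx
  lift y to ℝ≥0 using hy
  have := NNReal.rpow_add_rpow_le (p := 2) (q := p) x y two_pos hp
  have h2 := NNReal.coe_le_coe.2 this
  push_cast [NNReal.coe_rpow] at h2
  rw [Real.sqrt_eq_rpow]
  refine h2.trans_eq ?_
  norm_num


open Real

lemma geom_sq_tsum {r : ℝ} (hr0 : 0 ≤ r) (hr1 : r < 1) :
    Summable (fun k : ℕ => (r ^ (2*k+1))^2) ∧
      (∑' k : ℕ, (r ^ (2*k+1))^2) = r^2 / (1 - r^4) := by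
  have h4 : r^4 < 1 := pow_lt_one₀ hr0 hr1 (by norm_num)
  have heq : (fun k : ℕ => (r ^ (2*k+1))^2) = (fun k : ℕ => r^2 * (r^4)^k) := by
    funext k
    rw [← pow_mul, ← pow_mul, show (2*k+1)*2 = 2 + 4*k by ring, pow_add]
  constructor
  · rw [heq]
    exact (summable_geometric_of_lt_one (by positivity) h4).mul_left _
  · rw [heq, tsum_mul_left, tsum_geometric_of_lt_one (by positivity) h4, div_eq_mul_inv]

lemma cs_step (A : ℕ → ℝ) (h0 : ∀ k, 0 ≤ A k) (hsum : Summable A) (hA : ∑' k, A k ≤ 1)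
    {r : ℝ} (hr0 : 0 ≤ r) (hr1 : r < 1) :
    ∑' k : ℕ, Real.sqrt (A k) * r ^ (2*k+1) ≤ r / Real.sqrt (1 - r^4) := by
  obtain ⟨hgs, hgt⟩ := geom_sq_tsum hr0 hr1
  have h4 : r^4 < 1 := pow_lt_one₀ hr0 hr1 (by norm_num)
  have hA1 : ∀ k, A k ≤ 1 := fun k => (Summable.le_tsum hsum k (fun _ _ => h0 _)).trans hA
  have hr2 : r^2 < 1 := pow_lt_one₀ hr0 hr1 (by norm_num)
  have hgeo : Summable (fun k : ℕ => r * (r^2)^k) :=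
    (summable_geometric_of_lt_one (by positivity) hr2).mul_left r
  have hle : ∀ k : ℕ, Real.sqrt (A k) * r ^ (2*k+1) ≤ r * (r^2)^k := by
    intro k
    have h1 : Real.sqrt (A k) ≤ 1 := by
      rw [show (1:ℝ) = Real.sqrt 1 by simp]
      exact Real.sqrt_le_sqrt (hA1 k)
    calc Real.sqrt (A k) * r ^ (2*k+1) ≤ 1 * r ^ (2*k+1) :=
          mul_le_mul_of_nonneg_right h1 (by positivity)
      _ = r * (r^2)^k := by rw [one_mul, pow_add, pow_mul, pow_one, mul_comm]
  have hs : Summable (fun k : ℕ => Real.sqrt (A k) * r ^ (2*k+1)) :=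
    Summable.of_nonneg_of_le (fun k => by positivity) hle hgeo
  apply Summable.tsum_le_of_sum_le hs
  intro s
  have cs := Finset.sum_mul_sq_le_sq_mul_sq s (fun k => Real.sqrt (A k)) (fun k => r ^ (2*k+1))
  have hA' : (∑ k ∈ s, Real.sqrt (A k) ^ 2) ≤ 1 := by
    have : ∀ k ∈ s, Real.sqrt (A k) ^ 2 = A k := fun k _ => Real.sq_sqrt (h0 k)
    rw [Finset.sum_congr rfl this]
    exact (Summable.sum_le_tsum s (fun k _ => h0 k) hsum).trans hA
  have hG : (∑ k ∈ s, (r ^ (2*k+1))^2) ≤ r^2 / (1 - r^4) := by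
    rw [← hgt]
    exact Summable.sum_le_tsum s (fun k _ => by positivity) hgs
  have hnn : 0 ≤ ∑ k ∈ s, Real.sqrt (A k) * r ^ (2*k+1) :=
    Finset.sum_nonneg (fun k _ => by positivity)
  have hbd : (∑ k ∈ s, Real.sqrt (A k) * r ^ (2*k+1))^2 ≤ r^2 / (1 - r^4) := by
    calc (∑ k ∈ s, Real.sqrt (A k) * r ^ (2*k+1))^2
        ≤ (∑ k ∈ s, Real.sqrt (A k) ^ 2) * (∑ k ∈ s, (r ^ (2*k+1))^2) := cs
      _ ≤ 1 * (r^2 / (1 - r^4)) := by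
          apply mul_le_mul hA' hG (Finset.sum_nonneg (fun k _ => by positivity)) zero_le_one
      _ = r^2 / (1 - r^4) := one_mul _
  have := (Real.le_sqrt hnn (div_nonneg (by positivity) (by linarith))).2 hbd
  refine this.trans ?_
  rw [Real.sqrt_div (by positivity : (0:ℝ) ≤ r^2), Real.sqrt_sq hr0]


open MeasureTheory Real Filter AddCircle
open scoped ComplexConjugate NNReal ENNReal

noncomputable section

example : Fact ((0:ℝ) < 1) := inferInstance

lemma toCircle_pow (t : AddCircle (1:ℝ)) (m : ℕ) :
    (toCircle t : ℂ) ^ m = fourier (m : ℤ) t := by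
  induction m with
  | zero => simpa using fourier_zero.symm
  | succ n ih =>
      have hcast : ((n + 1 : ℕ) : ℤ) = (n : ℤ) + 1 := by push_cast; ring
      rw [pow_succ, ih, hcast, fourier_add, fourier_one]

lemma bessel_step (a b : ℕ → ℂ) (h g : ℂ → ℂ)
    (hh : ∀ z : ℂ, ‖z‖ < 1 → HasSum (fun k : ℕ => a k * z ^ (2 * k + 1)) (h z))
    (hg : ∀ z : ℂ, ‖z‖ < 1 → HasSum (fun k : ℕ => b k * z ^ (2 * k + 1)) (g z))
    (hbound : ∀ z : ℂ, ‖z‖ < 1 → ‖h z + (starRingEnd ℂ) (g z)‖ < 1)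
    {r : ℝ} (hr0 : 0 ≤ r) (hr1 : r < 1) (s : Finset ℕ) :
    ∑ k ∈ s, (‖a k‖ ^ 2 + ‖b k‖ ^ 2) * (r ^ (2 * k + 1)) ^ 2 ≤ 1 := by
  have hrc : ‖(r : ℂ)‖ < 1 := by
    rwa [Complex.norm_real, Real.norm_eq_abs, abs_of_nonneg hr0]
  have hnorm_term : ∀ (c : ℂ) (k : ℕ), ‖c * (r:ℂ) ^ (2*k+1)‖ = ‖c‖ * r ^ (2*k+1) := by
    intro c k
    rw [norm_mul, norm_pow, Complex.norm_real, Real.norm_eq_abs, abs_of_nonneg hr0]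
  have hsa : Summable (fun k : ℕ => ‖a k‖ * r ^ (2*k+1)) := by
    have h1 : Summable (fun k : ℕ => ‖a k * (r:ℂ) ^ (2*k+1)‖) :=
      summable_norm_iff.2 (hh _ hrc).summable
    simpa [hnorm_term, abs_of_nonneg hr0] using h1
  have hsb : Summable (fun k : ℕ => ‖b k‖ * r ^ (2*k+1)) := by
    have h1 : Summable (fun k : ℕ => ‖b k * (r:ℂ) ^ (2*k+1)‖) :=
      summable_norm_iff.2 (hg _ hrc).summable
    simpa [hnorm_term, abs_of_nonneg hr0] using h1
  set cF : ℕ → C(AddCircle (1:ℝ), ℂ) := fun k =>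
    (a k * (r:ℂ) ^ (2*k+1)) • fourier ((2*k+1 : ℕ) : ℤ)
      + ((starRingEnd ℂ) (b k) * (r:ℂ) ^ (2*k+1)) • fourier (-((2*k+1 : ℕ) : ℤ)) with hcF
  have hcFnorm : ∀ k, ‖cF k‖ ≤ ‖a k‖ * r ^ (2*k+1) + ‖b k‖ * r ^ (2*k+1) := by
    intro k
    refine (norm_add_le _ _).trans ?_
    have n1 : ‖((a k * (r:ℂ) ^ (2*k+1)) • fourier ((2*k+1 : ℕ) : ℤ) : C(AddCircle (1:ℝ), ℂ))‖
        ≤ ‖a k‖ * r ^ (2*k+1) := by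
      refine (norm_smul_le (α := ℂ) (β := C(AddCircle (1:ℝ), ℂ)) _ _).trans ?_
      rw [fourier_norm, mul_one, hnorm_term]
    have n2 : ‖(((starRingEnd ℂ) (b k) * (r:ℂ) ^ (2*k+1)) • fourier (-((2*k+1 : ℕ) : ℤ)) : C(AddCircle (1:ℝ), ℂ))‖
        ≤ ‖b k‖ * r ^ (2*k+1) := by
      refine (norm_smul_le (α := ℂ) (β := C(AddCircle (1:ℝ), ℂ)) _ _).trans ?_
      rw [fourier_norm, mul_one, hnorm_term, RCLike.norm_conj]
    exact add_le_add n1 n2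
  have hsum_cF : Summable cF := .of_norm_bounded (hsa.add hsb) hcFnorm
  obtain ⟨S, hS⟩ := hsum_cF
  have hz : ∀ t : AddCircle (1:ℝ), ‖(r:ℂ) * (toCircle t : ℂ)‖ < 1 := by
    intro t
    rw [norm_mul, Circle.norm_coe, mul_one]
    exact hrc
  have hSpt : ∀ t : AddCircle (1:ℝ),
      S t = h ((r:ℂ) * toCircle t) + (starRingEnd ℂ) (g ((r:ℂ) * toCircle t)) := by
    intro t
    set z : ℂ := (r:ℂ) * toCircle t with hzdef
    have h1 : HasSum (fun k : ℕ => a k * z ^ (2*k+1)) (h z) := hh _ (hz t)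
    have h2 : HasSum (fun k : ℕ => star (b k * z ^ (2*k+1))) (star (g z)) :=
      (hg _ (hz t)).star
    have hterm : ∀ k : ℕ, cF k t
        = a k * z ^ (2*k+1) + star (b k * z ^ (2*k+1)) := by
      intro k
      simp only [hcF, ContinuousMap.add_apply, ContinuousMap.smul_apply, smul_eq_mul]
      rw [hzdef, mul_pow, toCircle_pow]
      have : (star (b k * ((r:ℂ) ^ (2*k+1) * fourier ((2*k+1:ℕ):ℤ) t)) : ℂ)
          = (starRingEnd ℂ) (b k) * (r:ℂ) ^ (2*k+1) * fourier (-((2*k+1:ℕ):ℤ)) t := by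
        rw [fourier_neg]
        simp only [star_mul', ← Complex.ofReal_pow, RCLike.star_def, Complex.conj_ofReal]
        ring
      rw [this]
      ring
    have hsum_t : HasSum (fun k => cF k t) (h z + star (g z)) := by
      have := h1.add h2
      simpa [hterm] using this
    have heval := hS.mapL (ContinuousMap.evalCLM ℂ t)
    exact (heval.unique hsum_t)
  have hSle : ∀ t, ‖S t‖ ≤ 1 := fun t => by
    rw [hSpt t]; exact (hbound _ (hz t)).le
  set x : Lp ℂ 2 (haarAddCircle (T := 1)) := ContinuousMap.toLp (E := ℂ) 2 haarAddCircle ℂ S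
    with hxdef
  have hxnorm : ‖x‖ ≤ 1 := by
    have hb : ∀ᵐ t ∂(haarAddCircle (T := 1)), ‖x t‖ ≤ 1 := by
      filter_upwards [ContinuousMap.coeFn_toLp (p := 2) haarAddCircle (𝕜 := ℂ) S] with t ht
      rw [show (x : AddCircle (1:ℝ) → ℂ) t = S t from ht]
      exact hSle t
    have hC := Lp.norm_le_of_ae_bound (f := x) zero_le_one hb
    have h1 : (measureUnivNNReal (haarAddCircle (T := 1))) = 1 := by
      simp [measureUnivNNReal, measure_univ]
    rw [h1] at hC
    simpa using hC
  have hinner : ∀ n : ℤ, HasSum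
      (fun k : ℕ => (if n = ((2*k+1 : ℕ) : ℤ) then a k * (r:ℂ) ^ (2*k+1) else 0)
        + (if n = -((2*k+1 : ℕ) : ℤ) then (starRingEnd ℂ) (b k) * (r:ℂ) ^ (2*k+1) else 0))
      (inner (𝕜 := ℂ) (fourierLp 2 n) x) := by
    intro n
    have hmap := hS.mapL ((innerSL ℂ (fourierLp (T := 1) 2 n)).comp
      (ContinuousMap.toLp (E := ℂ) 2 haarAddCircle ℂ))
    have ho := orthonormal_fourier (T := 1)
    rw [orthonormal_iff_ite] at ho
    have hterm : ∀ (c : ℂ) (m : ℤ),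
        (inner (𝕜 := ℂ) (fourierLp (T := 1) 2 n)
          (ContinuousMap.toLp (E := ℂ) 2 haarAddCircle ℂ (c • fourier m)) : ℂ)
          = if n = m then c else 0 := by
      intro c m
      rw [_root_.map_smul (ContinuousMap.toLp (E := ℂ) 2 haarAddCircle ℂ) c (fourier m),
        inner_smul_right, ho n m]
      simp [mul_ite]
    convert hmap using 2 with k
    case e'_3 => rfl
    case e'_6 => rfl
    simp only [ContinuousLinearMap.comp_apply, innerSL_apply_apply, hcF, map_add, inner_add_right]
    rw [hterm, hterm]
  have hcoefA : ∀ k₀ : ℕ,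
      (inner (𝕜 := ℂ) (fourierLp (T := 1) 2 ((2*k₀+1 : ℕ) : ℤ)) x : ℂ)
        = a k₀ * (r:ℂ) ^ (2*k₀+1) := by
    intro k₀
    have hfun : (fun k : ℕ =>
        (if ((2*k₀+1 : ℕ) : ℤ) = ((2*k+1 : ℕ) : ℤ) then a k * (r:ℂ) ^ (2*k+1) else 0)
          + (if ((2*k₀+1 : ℕ) : ℤ) = -((2*k+1 : ℕ) : ℤ) then
              (starRingEnd ℂ) (b k) * (r:ℂ) ^ (2*k+1) else 0))
        = fun k => if k = k₀ then a k₀ * (r:ℂ) ^ (2*k₀+1) else 0 := by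
      funext k
      have h2 : ¬ (((2*k₀+1 : ℕ) : ℤ) = -((2*k+1 : ℕ) : ℤ)) := by omega
      rw [if_neg h2, add_zero]
      by_cases hk : k = k₀
      · subst hk
        rw [if_pos rfl, if_pos rfl]
      · rw [if_neg (by omega), if_neg hk]
    have h1 := hinner ((2*k₀+1 : ℕ) : ℤ)
    rw [hfun] at h1
    exact h1.unique (hasSum_ite_eq k₀ _)
  have hcoefB : ∀ k₀ : ℕ,
      (inner (𝕜 := ℂ) (fourierLp (T := 1) 2 (-((2*k₀+1 : ℕ) : ℤ))) x : ℂ)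
        = (starRingEnd ℂ) (b k₀) * (r:ℂ) ^ (2*k₀+1) := by
    intro k₀
    have hfun : (fun k : ℕ =>
        (if -((2*k₀+1 : ℕ) : ℤ) = ((2*k+1 : ℕ) : ℤ) then a k * (r:ℂ) ^ (2*k+1) else 0)
          + (if -((2*k₀+1 : ℕ) : ℤ) = -((2*k+1 : ℕ) : ℤ) then
              (starRingEnd ℂ) (b k) * (r:ℂ) ^ (2*k+1) else 0))
        = fun k => if k = k₀ then (starRingEnd ℂ) (b k₀) * (r:ℂ) ^ (2*k₀+1) else 0 := by
      funext k
      have h2 : ¬ (-((2*k₀+1 : ℕ) : ℤ) = ((2*k+1 : ℕ) : ℤ)) := by omega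
      rw [if_neg h2, zero_add]
      by_cases hk : k = k₀
      · subst hk
        rw [if_pos rfl, if_pos rfl]
      · rw [if_neg (by omega), if_neg hk]
    have h1 := hinner (-((2*k₀+1 : ℕ) : ℤ))
    rw [hfun] at h1
    exact h1.unique (hasSum_ite_eq k₀ _)
  classical
  set f1 : ℕ → ℤ := fun k => ((2*k+1 : ℕ) : ℤ) with hf1
  set f2 : ℕ → ℤ := fun k => -((2*k+1 : ℕ) : ℤ) with hf2
  have hdisj : Disjoint (s.image f1) (s.image f2) := by
    rw [Finset.disjoint_left]
    intro n hn1 hn2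
    simp only [Finset.mem_image, hf1, hf2] at hn1 hn2
    obtain ⟨k, _, rfl⟩ := hn1
    obtain ⟨k', _, hk'⟩ := hn2
    omega
  have hbes := (orthonormal_fourier (T := 1)).sum_inner_products_le
    (s := s.image f1 ∪ s.image f2) x
  rw [Finset.sum_union hdisj,
    Finset.sum_image (fun k _ k' _ hkk => by simp only [hf1] at hkk; omega),
    Finset.sum_image (fun k _ k' _ hkk => by simp only [hf2] at hkk; omega)] at hbes
  have hval1 : ∀ k ∈ s, ‖(inner (𝕜 := ℂ) (fourierLp (T := 1) 2 (f1 k)) x : ℂ)‖^2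
      = ‖a k‖^2 * (r ^ (2*k+1))^2 := by
    intro k _
    rw [hf1]
    rw [hcoefA k, hnorm_term, mul_pow]
  have hval2 : ∀ k ∈ s, ‖(inner (𝕜 := ℂ) (fourierLp (T := 1) 2 (f2 k)) x : ℂ)‖^2
      = ‖b k‖^2 * (r ^ (2*k+1))^2 := by
    intro k _
    rw [hf2]
    rw [hcoefB k, hnorm_term, RCLike.norm_conj, mul_pow]
  rw [Finset.sum_congr rfl hval1, Finset.sum_congr rfl hval2] at hbes
  have hfinal : ∑ k ∈ s, (‖a k‖ ^ 2 + ‖b k‖ ^ 2) * (r ^ (2*k+1))^2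
      = (∑ k ∈ s, ‖a k‖^2 * (r ^ (2*k+1))^2) + ∑ k ∈ s, ‖b k‖^2 * (r ^ (2*k+1))^2 := by
    rw [← Finset.sum_add_distrib]
    exact Finset.sum_congr rfl (fun k _ => by ring)
  rw [hfinal]
  refine hbes.trans ?_
  calc ‖x‖ ^ 2 ≤ 1 ^ 2 := by
        exact pow_le_pow_left₀ (norm_nonneg _) hxnorm 2
    _ = 1 := one_pow 2

lemma coeff_sq_sum_le (a b : ℕ → ℂ) (h g : ℂ → ℂ)
    (hh : ∀ z : ℂ, ‖z‖ < 1 → HasSum (fun k : ℕ => a k * z ^ (2 * k + 1)) (h z))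
    (hg : ∀ z : ℂ, ‖z‖ < 1 → HasSum (fun k : ℕ => b k * z ^ (2 * k + 1)) (g z))
    (hbound : ∀ z : ℂ, ‖z‖ < 1 → ‖h z + (starRingEnd ℂ) (g z)‖ < 1) :
    Summable (fun k : ℕ => ‖a k‖ ^ 2 + ‖b k‖ ^ 2) ∧
      (∑' k : ℕ, (‖a k‖ ^ 2 + ‖b k‖ ^ 2)) ≤ 1 := by
  have key : ∀ s : Finset ℕ, ∑ k ∈ s, (‖a k‖ ^ 2 + ‖b k‖ ^ 2) ≤ 1 := by
    intro s
    have hcont : Continuous (fun r : ℝ =>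
        ∑ k ∈ s, (‖a k‖ ^ 2 + ‖b k‖ ^ 2) * (r ^ (2 * k + 1)) ^ 2) := by
      apply continuous_finset_sum
      intro k _
      exact continuous_const.mul ((continuous_pow _).pow 2)
    have hlim : Filter.Tendsto (fun r : ℝ =>
        ∑ k ∈ s, (‖a k‖ ^ 2 + ‖b k‖ ^ 2) * (r ^ (2 * k + 1)) ^ 2)
        (nhdsWithin 1 (Set.Iio 1)) (nhds (∑ k ∈ s, (‖a k‖ ^ 2 + ‖b k‖ ^ 2))) := by
      have h1 := (hcont.tendsto 1).mono_left
        (nhdsWithin_le_nhds (s := Set.Iio (1:ℝ)))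
      simpa using h1
    refine le_of_tendsto hlim ?_
    have hev : ∀ᶠ r in nhdsWithin (1:ℝ) (Set.Iio 1), 0 < r :=
      eventually_nhdsWithin_of_eventually_nhds (eventually_gt_nhds one_pos)
    filter_upwards [hev, self_mem_nhdsWithin] with r hr0 hr1
    exact bessel_step a b h g hh hg hbound (le_of_lt hr0) hr1 s
  have h0 : (0 : ℕ → ℝ) ≤ fun k => ‖a k‖ ^ 2 + ‖b k‖ ^ 2 := fun k => by positivity
  have hsummable := summable_of_sum_le h0 key
  exact ⟨hsummable, Summable.tsum_le_of_sum_le hsummable key⟩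

/-- Theorem 4 of Kayumov–Ponnusamy: `p`-Bohr-type inequalities for odd bounded
harmonic functions `f = h + conj g` on the unit disk. -/
theorem odd_harmonic_p_bohr
    (a b : ℕ → ℂ) (h g : ℂ → ℂ)
    (hh : ∀ z : ℂ, ‖z‖ < 1 → HasSum (fun k : ℕ => a k * z ^ (2 * k + 1)) (h z))
    (hg : ∀ z : ℂ, ‖z‖ < 1 → HasSum (fun k : ℕ => b k * z ^ (2 * k + 1)) (g z))
    (hbound : ∀ z : ℂ, ‖z‖ < 1 → ‖h z + (starRingEnd ℂ) (g z)‖ < 1) :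
    (∀ p : ℝ, 1 ≤ p → p ≤ 2 → ∀ r : ℝ, 0 ≤ r →
      r ≤ Real.sqrt (Real.sqrt ((4 : ℝ) ^ (2 / p - 2) + 1) - (2 : ℝ) ^ (2 / p - 2)) →
      (∑' k : ℕ, (‖a k‖ ^ p + ‖b k‖ ^ p) ^ (1 / p) * r ^ (2 * k + 1))
          ≤ (2 : ℝ) ^ (1 / p - 1 / 2) * (r / Real.sqrt (1 - r ^ 4)) ∧
        (2 : ℝ) ^ (1 / p - 1 / 2) * (r / Real.sqrt (1 - r ^ 4)) ≤ 1) ∧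
    (∀ p : ℝ, 2 ≤ p → ∀ r : ℝ, 0 ≤ r →
      r ≤ Real.sqrt ((Real.sqrt 5 - 1) / 2) →
      (∑' k : ℕ, (‖a k‖ ^ p + ‖b k‖ ^ p) ^ (1 / p) * r ^ (2 * k + 1))
          ≤ r / Real.sqrt (1 - r ^ 4) ∧
        r / Real.sqrt (1 - r ^ 4) ≤ 1) := by
  obtain ⟨hsumA, htsumA⟩ := coeff_sq_sum_le a b h g hh hg hbound
  set A : ℕ → ℝ := fun k => ‖a k‖ ^ 2 + ‖b k‖ ^ 2 with hA
  have hA0 : ∀ k, 0 ≤ A k := fun k => by positivity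
  constructor
  · -- case 1 ≤ p ≤ 2
    intro p hp1 hp2 r hr0 hrle
    set c : ℝ := (2:ℝ) ^ (2/p - 2) with hc
    have hc0 : 0 < c := Real.rpow_pos_of_pos two_pos _
    have h4c : (4:ℝ) ^ (2/p - 2) = c ^ 2 := by
      rw [hc, ← Real.rpow_natCast ((2:ℝ) ^ (2/p-2)) 2, ← Real.rpow_mul (by norm_num)]
      rw [show (4:ℝ) = (2:ℝ) ^ (2:ℝ) by
        rw [show (2:ℝ) = ((2:ℕ):ℝ) by norm_num, Real.rpow_natCast]; norm_num]
      rw [← Real.rpow_mul (by norm_num)]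
      norm_num
      ring_nf
    have hsqc : c ≤ Real.sqrt (c^2 + 1) :=
      (Real.le_sqrt hc0.le (by positivity)).2 (by nlinarith)
    rw [h4c] at hrle
    have hr2 : r ^ 2 ≤ Real.sqrt (c^2+1) - c := (Real.le_sqrt hr0 (by linarith)).1 hrle
    have hsq1 : (r^2 + c)^2 ≤ c^2 + 1 := by
      have hx := Real.sq_sqrt (show (0:ℝ) ≤ c^2 + 1 by positivity)
      nlinarith [Real.sqrt_nonneg (c^2+1), hr2, sq_nonneg r]
    have hkey : 2 * c * r^2 ≤ 1 - r^2 * r^2 := by nlinarith [hsq1]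
    have hr1 : r < 1 := by
      have hlt : Real.sqrt (c^2+1) < 1 + c := by
        rw [show (1+c) = Real.sqrt ((1+c)^2) from (Real.sqrt_sq (by positivity)).symm]
        exact Real.sqrt_lt_sqrt (by positivity) (by nlinarith)
      nlinarith [hr2, sq_nonneg r, hr0]
    have hr4 : 0 < 1 - r ^ 4 := by
      have := pow_lt_one₀ hr0 hr1 (n := 4) (by norm_num)
      linarith
    have hsqs : Summable (fun k : ℕ => Real.sqrt (A k) * r ^ (2*k+1)) := by
      have hr2' : r^2 < 1 := pow_lt_one₀ hr0 hr1 (by norm_num)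
      have hgeo : Summable (fun k : ℕ => r * (r^2)^k) :=
        (summable_geometric_of_lt_one (by positivity) hr2').mul_left r
      refine Summable.of_nonneg_of_le (fun k => by positivity) (fun k => ?_) hgeo
      have h1 : Real.sqrt (A k) ≤ 1 := by
        rw [show (1:ℝ) = Real.sqrt 1 by simp]
        exact Real.sqrt_le_sqrt ((Summable.le_tsum hsumA k fun _ _ => hA0 _).trans htsumA)
      calc Real.sqrt (A k) * r ^ (2*k+1) ≤ 1 * r ^ (2*k+1) :=
            mul_le_mul_of_nonneg_right h1 (by positivity)
        _ = r * (r^2)^k := by rw [one_mul, pow_add, pow_mul, pow_one, mul_comm]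
    have hterm_le : ∀ k : ℕ, (‖a k‖ ^ p + ‖b k‖ ^ p) ^ (1/p) * r ^ (2*k+1)
        ≤ (2:ℝ) ^ (1/p - 1/2) * (Real.sqrt (A k) * r ^ (2*k+1)) := by
      intro k
      rw [← mul_assoc]
      exact mul_le_mul_of_nonneg_right
        (lp_bound_small (norm_nonneg _) (norm_nonneg _) hp1 hp2) (by positivity)
    have hsum_lhs : Summable (fun k : ℕ => (‖a k‖ ^ p + ‖b k‖ ^ p) ^ (1/p) * r ^ (2*k+1)) :=
      Summable.of_nonneg_of_le (fun k => by positivity) hterm_le (hsqs.mul_left _)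
    constructor
    · calc (∑' k : ℕ, (‖a k‖ ^ p + ‖b k‖ ^ p) ^ (1/p) * r ^ (2*k+1))
          ≤ ∑' k : ℕ, (2:ℝ) ^ (1/p - 1/2) * (Real.sqrt (A k) * r ^ (2*k+1)) :=
            Summable.tsum_le_tsum hterm_le hsum_lhs (hsqs.mul_left _)
        _ = (2:ℝ) ^ (1/p - 1/2) * ∑' k : ℕ, Real.sqrt (A k) * r ^ (2*k+1) := tsum_mul_left
        _ ≤ (2:ℝ) ^ (1/p - 1/2) * (r / Real.sqrt (1 - r^4)) := by
            exact mul_le_mul_of_nonneg_left (cs_step A hA0 hsumA htsumA hr0 hr1)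
              (Real.rpow_nonneg (by norm_num) _)
    · have hs4 : 0 < Real.sqrt (1 - r ^ 4) := Real.sqrt_pos.2 hr4
      rw [mul_div_assoc'] at *
      rw [div_le_one hs4]
      refine (Real.le_sqrt (by positivity) hr4.le).2 ?_
      have hpow : ((2:ℝ) ^ (1/p - 1/2) * r) ^ 2 = 2 * c * r ^ 2 := by
        rw [mul_pow, ← Real.rpow_natCast ((2:ℝ) ^ (1/p-1/2)) 2, ← Real.rpow_mul (by norm_num)]
        rw [show (1/p - 1/2) * ((2:ℕ):ℝ) = (2/p - 2) + 1 by push_cast; ring]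
        rw [Real.rpow_add two_pos, Real.rpow_one, hc]
        ring
      rw [hpow]
      have : r ^ 4 = r^2 * r^2 := by ring
      linarith [hkey]
  · -- case p ≥ 2
    intro p hp2 r hr0 hrle
    have h5 : Real.sqrt 5 ^ 2 = 5 := Real.sq_sqrt (by norm_num)
    have h5nn : 0 ≤ Real.sqrt 5 := Real.sqrt_nonneg 5
    have h5b : 1 ≤ Real.sqrt 5 := by nlinarith
    have hr2 : r ^ 2 ≤ (Real.sqrt 5 - 1) / 2 := (Real.le_sqrt hr0 (by linarith)).1 hrle
    have hkey : r^2 * r^2 + r^2 ≤ 1 := by nlinarith [hr2, sq_nonneg r]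
    have hr1 : r < 1 := by
      have h53 : Real.sqrt 5 < 3 := by nlinarith
      nlinarith [hr2, hr0]
    have hr4 : 0 < 1 - r ^ 4 := by
      have := pow_lt_one₀ hr0 hr1 (n := 4) (by norm_num)
      linarith
    have hp1 : (1:ℝ) ≤ p := by linarith
    have hsqs : Summable (fun k : ℕ => Real.sqrt (A k) * r ^ (2*k+1)) := by
      have hr2' : r^2 < 1 := pow_lt_one₀ hr0 hr1 (by norm_num)
      have hgeo : Summable (fun k : ℕ => r * (r^2)^k) :=
        (summable_geometric_of_lt_one (by positivity) hr2').mul_left r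
      refine Summable.of_nonneg_of_le (fun k => by positivity) (fun k => ?_) hgeo
      have h1 : Real.sqrt (A k) ≤ 1 := by
        rw [show (1:ℝ) = Real.sqrt 1 by simp]
        exact Real.sqrt_le_sqrt ((Summable.le_tsum hsumA k fun _ _ => hA0 _).trans htsumA)
      calc Real.sqrt (A k) * r ^ (2*k+1) ≤ 1 * r ^ (2*k+1) :=
            mul_le_mul_of_nonneg_right h1 (by positivity)
        _ = r * (r^2)^k := by rw [one_mul, pow_add, pow_mul, pow_one, mul_comm]
    have hterm_le : ∀ k : ℕ, (‖a k‖ ^ p + ‖b k‖ ^ p) ^ (1/p) * r ^ (2*k+1)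
        ≤ Real.sqrt (A k) * r ^ (2*k+1) := fun k =>
      mul_le_mul_of_nonneg_right
        (lp_bound_big (norm_nonneg _) (norm_nonneg _) hp2) (by positivity)
    have hsum_lhs : Summable (fun k : ℕ => (‖a k‖ ^ p + ‖b k‖ ^ p) ^ (1/p) * r ^ (2*k+1)) :=
      Summable.of_nonneg_of_le (fun k => by positivity) hterm_le hsqs
    constructor
    · exact (Summable.tsum_le_tsum hterm_le hsum_lhs hsqs).trans
        (cs_step A hA0 hsumA htsumA hr0 hr1)
    · have hs4 : 0 < Real.sqrt (1 - r ^ 4) := Real.sqrt_pos.2 hr4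
      rw [div_le_one hs4]
      refine (Real.le_sqrt hr0 hr4.le).2 ?_
      have : r ^ 4 = r^2 * r^2 := by ring
      linarith [hkey]
end
end
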